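/- arXiv:1407.1966 — 9 statements merged into one kernel-verified Lean document; each statement's English description precedes it below -/
import Mathlib

section
/- Let G be a finite abelian group and W ⊆ ℤ a nonempty set of weights. Then the sequence (D_{W,m}(G))_{m∈ℕ} is eventually an arithmetic progression with common difference e_W(G); that is, there exist M ∈ ℕ and c ∈ ℤ such that D_{W,m}(G) = c + m·e_W(G) for every m ≥ M. -/
open scoped BigOperators

/-- `l` encodes a `W`-weighted zero-subsum of the sequence (multiset) `S`:
a nonempty list of (weight, group element) pairs with weights in `W`, whose
group elements form a sub-multiset of `S` and whose weighted sum is zero. -/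
def IsWZeroSubsum {G : Type*} [AddCommGroup G] (W : Set ℤ) (S : Multiset G)
    (l : List (ℤ × G)) : Prop :=
  l ≠ [] ∧ (∀ p ∈ l, p.1 ∈ W) ∧ (↑(l.map Prod.snd) : Multiset G) ≤ S ∧
    (l.map fun p => p.1 • p.2).sum = 0

/-- `S` has a `W`-weighted zero-subsum whose length lies in `L`. -/
def HasWZeroSubsumLen {G : Type*} [AddCommGroup G] (W : Set ℤ) (S : Multiset G)
    (L : Set ℕ) : Prop :=
  ∃ l : List (ℤ × G), IsWZeroSubsum W S l ∧ l.length ∈ L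

/-- `S` has `m` pairwise disjoint `W`-weighted zero-subsums. -/
def HasDisjointWZeroSubsums {G : Type*} [AddCommGroup G] (W : Set ℤ) (S : Multiset G)
    (m : ℕ) : Prop :=
  ∃ ls : List (List (ℤ × G)), ls.length = m ∧
    (∀ l ∈ ls, l ≠ [] ∧ (∀ p ∈ l, p.1 ∈ W) ∧ (l.map fun p => p.1 • p.2).sum = 0) ∧
    (↑(ls.flatten.map Prod.snd) : Multiset G) ≤ S

/-- The `m`-wise `W`-weighted Davenport constant `D_{W,m}(G)`. -/
noncomputable def DW (W : Set ℤ) (G : Type*) [AddCommGroup G] (m : ℕ) : ℕ :=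
  sInf {n : ℕ | ∀ S : Multiset G, n ≤ Multiset.card S → HasDisjointWZeroSubsums W S m}

/-- The `L`-constrained `W`-weighted Davenport constant `s_{W,L}(G)`, valued in `ℕ∞`. -/
noncomputable def sWL (W : Set ℤ) (G : Type*) [AddCommGroup G] (L : Set ℕ) : ℕ∞ :=
  sInf {N : ℕ∞ | ∃ n : ℕ, N = (n : ℕ∞) ∧
    ∀ S : Multiset G, n ≤ Multiset.card S → HasWZeroSubsumLen W S L}

/-- The `d`-constrained `W`-weighted Davenport constant `s_{W,≤d}(G)`. -/
noncomputable def sWle (W : Set ℤ) (G : Type*) [AddCommGroup G] (d : ℕ) : ℕ∞ :=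
  sWL W G {t | 1 ≤ t ∧ t ≤ d}

/-- `e_W(G)`: the smallest `t ≥ 1` such that some `t` weights from `W` sum to a
multiple of `exp(G)`. -/
noncomputable def eW (W : Set ℤ) (G : Type*) [AddCommGroup G] : ℕ :=
  sInf {t : ℕ | 1 ≤ t ∧ ∃ w : Fin t → ℤ, (∀ i, w i ∈ W) ∧
    ((AddMonoid.exponent G : ℤ) ∣ ∑ i, w i)}

/-- `W` is multiplicatively closed modulo `n`. -/
def MulClosedMod (W : Set ℤ) (n : ℕ) : Prop :=
  ∀ w ∈ W, ∀ w' ∈ W, ∃ u ∈ W, (n : ℤ) ∣ w * w' - u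

set_option linter.unusedSectionVars false

section Aux

variable {G : Type*} [AddCommGroup G] [Fintype G] [DecidableEq G] {W : Set ℤ}

private lemma eW_spec (hW : W.Nonempty) :
    1 ≤ eW W G ∧ ∃ w : Fin (eW W G) → ℤ, (∀ i, w i ∈ W) ∧
      ((AddMonoid.exponent G : ℤ) ∣ ∑ i, w i) := by
  obtain ⟨w0, hw0⟩ := hW
  have hmem : AddMonoid.exponent G ∈ {t : ℕ | 1 ≤ t ∧ ∃ w : Fin t → ℤ, (∀ i, w i ∈ W) ∧
      ((AddMonoid.exponent G : ℤ) ∣ ∑ i, w i)} := by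
    refine ⟨Nat.one_le_iff_ne_zero.mpr AddMonoid.exponent_ne_zero_of_finite,
      fun _ => w0, fun _ => hw0, ⟨w0, ?_⟩⟩
    simp [Finset.sum_const, mul_comm]
  exact Nat.sInf_mem ⟨_, hmem⟩

private lemma smul_of_exp_dvd (g : G) {s : ℤ} (hs : (AddMonoid.exponent G : ℤ) ∣ s) :
    s • g = 0 := by
  obtain ⟨k, rfl⟩ := hs
  rw [mul_smul, natCast_zsmul, AddMonoid.exponent_nsmul_eq_zero]

private lemma list_sum_smul (L : List ℤ) (g : G) :
    (L.map (fun w => w • g)).sum = L.sum • g := by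
  induction L with
  | nil => simp
  | cons a t ih => simp [ih, add_smul]

/-- The canonical zero-subsum of length `eW W G` supported on one element. -/
private lemma repl_subsum (hW : W.Nonempty) (g : G) :
    ∃ l : List (ℤ × G), l ≠ [] ∧ (∀ p ∈ l, p.1 ∈ W) ∧
      ((l.map fun p => p.1 • p.2).sum = 0) ∧
      l.map Prod.snd = List.replicate (eW W G) g := by
  obtain ⟨he1, w, hwW, hdvd⟩ := eW_spec (G := G) hW
  refine ⟨List.ofFn (fun i : Fin (eW W G) => (w i, g)), ?_, ?_, ?_, ?_⟩
  · intro h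
    have := congrArg List.length h
    simp at this
    omega
  · intro p hp
    rw [List.mem_ofFn] at hp
    obtain ⟨i, rfl⟩ := hp
    exact hwW i
  · have h1 : (List.ofFn fun i : Fin (eW W G) => (w i, g)).map (fun p => p.1 • p.2) =
        List.ofFn (fun i : Fin (eW W G) => w i • g) := by
      rw [List.map_ofFn]; rfl
    rw [h1, List.sum_ofFn, ← Finset.sum_smul]
    exact smul_of_exp_dvd g hdvd
  · rw [List.map_ofFn]
    simp [Function.comp_def, List.ofFn_const]

private lemma pigeon (S : Multiset G) (k : ℕ) (h : Fintype.card G * k < Multiset.card S) :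
    ∃ g : G, k < S.count g := by
  classical
  by_contra hc
  push_neg at hc
  have h1 : Multiset.card S = ∑ g ∈ S.toFinset, S.count g := (Multiset.toFinset_sum_count_eq S).symm
  have h2 : ∑ g ∈ S.toFinset, S.count g ≤ ∑ _g ∈ S.toFinset, k :=
    Finset.sum_le_sum fun g _ => hc g
  have h3 : ∑ _g ∈ S.toFinset, k = S.toFinset.card * k := by
    simp [Finset.sum_const, mul_comm]
  have h4 : S.toFinset.card ≤ Fintype.card G := Finset.card_le_univ _
  have : Multiset.card S ≤ Fintype.card G * k := by
    calc Multiset.card S = ∑ g ∈ S.toFinset, S.count g := h1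
    _ ≤ S.toFinset.card * k := by rw [← h3]; exact h2
    _ ≤ Fintype.card G * k := Nat.mul_le_mul_right k h4
  omega

private lemma has_zero (S : Multiset G) : HasDisjointWZeroSubsums W S 0 :=
  ⟨[], rfl, by simp, by simp⟩

/-- Extraction step: pull out `eW` copies of an element with large multiplicity. -/
private lemma extract (hW : W.Nonempty) (S : Multiset G) (g : G)
    (hg : eW W G ≤ S.count g) (m : ℕ)
    (h : HasDisjointWZeroSubsums W (S - Multiset.replicate (eW W G) g) m) :
    HasDisjointWZeroSubsums W S (m + 1) := by
  classical
  obtain ⟨l, hl1, hl2, hl3, hl4⟩ := repl_subsum (G := G) hW g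
  obtain ⟨ls, hlen, hprop, hle⟩ := h
  have hrep : Multiset.replicate (eW W G) g ≤ S :=
    Multiset.le_count_iff_replicate_le.mp hg
  refine ⟨l :: ls, by simp [hlen], ?_, ?_⟩
  · intro l' hl'
    rcases List.mem_cons.mp hl' with rfl | hmem
    · exact ⟨hl1, hl2, hl3⟩
    · exact hprop l' hmem
  · have hflat : ((l :: ls).flatten.map Prod.snd : Multiset G) =
        (l.map Prod.snd : Multiset G) + (ls.flatten.map Prod.snd : Multiset G) := by
      simp [List.flatten_cons]
    rw [hflat, hl4]
    have : (ls.flatten.map Prod.snd : Multiset G) ≤ S - Multiset.replicate (eW W G) g := hle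
    have := (le_tsub_iff_left hrep).mp this
    simpa [Multiset.coe_replicate] using this

/-- Upper bound: every sufficiently long sequence has `m` disjoint zero-subsums. -/
private lemma allHas (hW : W.Nonempty) : ∀ m (S : Multiset G),
    Fintype.card G * (eW W G - 1) + 1 + m * eW W G ≤ Multiset.card S →
    HasDisjointWZeroSubsums W S m := by
  classical
  intro m
  induction m with
  | zero => intro S _; exact has_zero S
  | succ m ih =>
    intro S hS
    have he1 : 1 ≤ eW W G := (eW_spec (G := G) hW).1
    have hbig : Fintype.card G * (eW W G - 1) < Multiset.card S := by
      have : Fintype.card G * (eW W G - 1) + 1 ≤ Multiset.card S := by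
        calc Fintype.card G * (eW W G - 1) + 1
            ≤ Fintype.card G * (eW W G - 1) + 1 + (m+1) * eW W G := by omega
          _ ≤ Multiset.card S := hS
      omega
    obtain ⟨g, hg⟩ := pigeon S (eW W G - 1) hbig
    have hg' : eW W G ≤ S.count g := by omega
    have hrep : Multiset.replicate (eW W G) g ≤ S :=
      Multiset.le_count_iff_replicate_le.mp hg'
    have hcard : Multiset.card (S - Multiset.replicate (eW W G) g) =
        Multiset.card S - eW W G := by
      rw [Multiset.card_sub hrep, Multiset.card_replicate]
    have hrec : Fintype.card G * (eW W G - 1) + 1 + m * eW W G ≤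
        Multiset.card (S - Multiset.replicate (eW W G) g) := by
      rw [hcard]
      have : (m + 1) * eW W G = m * eW W G + eW W G := by ring
      omega
    exact extract hW S g hg' m (ih _ hrec)

private lemma DW_le (hW : W.Nonempty) (m : ℕ) :
    DW W G m ≤ Fintype.card G * (eW W G - 1) + 1 + m * eW W G :=
  Nat.sInf_le (fun S hS => allHas hW m S hS)

private lemma DW_mem (hW : W.Nonempty) (m : ℕ) :
    ∀ S : Multiset G, DW W G m ≤ Multiset.card S → HasDisjointWZeroSubsums W S m := by
  have h : (Fintype.card G * (eW W G - 1) + 1 + m * eW W G) ∈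
      {n : ℕ | ∀ S : Multiset G, n ≤ Multiset.card S → HasDisjointWZeroSubsums W S m} :=
    fun S hS => allHas hW m S hS
  exact Nat.sInf_mem ⟨_, h⟩

private lemma list_len_sum_ge (a : ℕ) : ∀ L : List ℕ, (∀ x ∈ L, a ≤ x) →
    L.length * a ≤ L.sum := by
  intro L
  induction L with
  | nil => simp
  | cons x t ih =>
    intro h
    have hx := h x List.mem_cons_self
    have ht := ih fun y hy => h y (List.mem_cons_of_mem x hy)
    simp only [List.length_cons, List.sum_cons]
    calc (t.length + 1) * a = t.length * a + a := by ring
    _ ≤ t.sum + x := by omega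
    _ = x + t.sum := by ring

/-- Lower bound: `DW W G m ≥ m * eW W G`. -/
private lemma DW_ge (hW : W.Nonempty) (m : ℕ) : m * eW W G ≤ DW W G m := by
  classical
  rcases Nat.eq_zero_or_pos m with rfl | hm
  · simp
  by_contra hlt
  push_neg at hlt
  -- counterexample sequence
  obtain ⟨g0, hg0⟩ := AddMonoid.exists_addOrderOf_eq_exponent
    (AddMonoid.ExponentExists.of_finite (G := G))
  have he1 : 1 ≤ eW W G := (eW_spec (G := G) hW).1
  set e := eW W G with hedef
  set S : Multiset G := Multiset.replicate (m * e - 1) g0 with hSdef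
  have hcardS : Multiset.card S = m * e - 1 := Multiset.card_replicate _ _
  have hhas : HasDisjointWZeroSubsums W S m := by
    apply DW_mem hW m S
    rw [hcardS]; omega
  obtain ⟨ls, hlen, hprop, hle⟩ := hhas
  -- every element appearing in the subsums equals g0
  have hallg0 : ∀ l ∈ ls, ∀ p ∈ l, (p : ℤ × G).2 = g0 := by
    intro l hl p hp
    have hmem : p.2 ∈ (ls.flatten.map Prod.snd : Multiset G) := by
      simp only [Multiset.mem_coe, List.mem_map]
      exact ⟨p, List.mem_flatten.mpr ⟨l, hl, hp⟩, rfl⟩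
    have := Multiset.mem_of_le hle hmem
    rw [hSdef] at this
    exact Multiset.eq_of_mem_replicate this
  -- each subsum has length ≥ e
  have hlenge : ∀ l ∈ ls, e ≤ l.length := by
    intro l hl
    obtain ⟨hne, hwW, hsum⟩ := hprop l hl
    have hmap : (l.map fun p => p.1 • p.2) = l.map fun p => p.1 • g0 := by
      apply List.map_congr_left
      intro p hp
      rw [hallg0 l hl p hp]
    have hmap2 : (l.map fun p => p.1 • g0) = (l.map Prod.fst).map fun w => w • g0 := by
      rw [List.map_map]; rfl
    have hsum2 : ((l.map Prod.fst).sum) • g0 = 0 := by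
      rw [← list_sum_smul]
      rw [← hmap2, ← hmap]
      exact hsum
    have hdvd : ((AddMonoid.exponent G : ℤ)) ∣ (l.map Prod.fst).sum := by
      rw [← hg0]
      exact addOrderOf_dvd_iff_zsmul_eq_zero.mpr hsum2
    have hlenpos : 0 < l.length := List.length_pos_iff.mpr hne
    have hmemset : l.length ∈ {t : ℕ | 1 ≤ t ∧ ∃ w : Fin t → ℤ, (∀ i, w i ∈ W) ∧
        ((AddMonoid.exponent G : ℤ) ∣ ∑ i, w i)} := by
      refine ⟨hlenpos, fun i => (l.get i).1, fun i => hwW _ (List.get_mem l i), ?_⟩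
      have : ∑ i : Fin l.length, (l.get i).1 = (l.map Prod.fst).sum := by
        have := Fin.sum_univ_fun_getElem l Prod.fst
        simpa [List.get_eq_getElem] using this
      rw [this]
      exact hdvd
    exact Nat.sInf_le hmemset
  -- total length is too big
  have htot : Multiset.card (ls.flatten.map Prod.snd : Multiset G) ≤ m * e - 1 := by
    have := Multiset.card_le_card hle
    rw [hcardS] at this
    exact this
  have hcard2 : Multiset.card (ls.flatten.map Prod.snd : Multiset G) =
      (ls.map List.length).sum := by
    simp [List.length_flatten, Function.comp_def, List.length_map]
  have hge : m * e ≤ (ls.map List.length).sum := by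
    have := list_len_sum_ge e (ls.map List.length) (by
      intro x hx
      obtain ⟨l, hl, rfl⟩ := List.mem_map.mp hx
      exact hlenge l hl)
    rw [List.length_map, hlen] at this
    exact this
  omega

/-- Step inequality once `DW` is large. -/
private lemma DW_step (hW : W.Nonempty) (m : ℕ)
    (h : Fintype.card G * (eW W G - 1) < DW W G m) :
    DW W G (m + 1) ≤ DW W G m + eW W G := by
  classical
  apply Nat.sInf_le
  intro S hS
  have he1 : 1 ≤ eW W G := (eW_spec (G := G) hW).1
  have hbig : Fintype.card G * (eW W G - 1) < Multiset.card S := by omega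
  obtain ⟨g, hg⟩ := pigeon S (eW W G - 1) hbig
  have hg' : eW W G ≤ S.count g := by omega
  have hrep : Multiset.replicate (eW W G) g ≤ S :=
    Multiset.le_count_iff_replicate_le.mp hg'
  have hcard : Multiset.card (S - Multiset.replicate (eW W G) g) =
      Multiset.card S - eW W G := by
    rw [Multiset.card_sub hrep, Multiset.card_replicate]
  apply extract hW S g hg' m
  apply DW_mem hW m
  rw [hcard]; omega

end Aux

/-- the sequence `m ↦ D_{W,m}(G)` is eventually an arithmetic
progression with common difference `e_W(G)`. -/
theorem stmt0 {G : Type*} [AddCommGroup G] [Fintype G] (W : Set ℤ) (hW : W.Nonempty) :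
    ∃ (M : ℕ) (c : ℤ), ∀ m : ℕ, M ≤ m → (DW W G m : ℤ) = c + (m : ℤ) * (eW W G : ℤ) := by
  classical
  set e := eW W G with hedef
  have he1 : 1 ≤ e := (eW_spec (G := G) hW).1
  set M0 : ℕ := Fintype.card G * (e - 1) + 1 with hM0def
  -- once m ≥ M0, DW is big enough for the step
  have hstep : ∀ m, M0 ≤ m → DW W G (m + 1) ≤ DW W G m + e := by
    intro m hm
    apply DW_step hW
    have h1 : m * e ≤ DW W G m := DW_ge hW m
    have h2 : m ≤ m * e := Nat.le_mul_of_pos_right m (by omega)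
    rw [← hedef]
    omega
  set f : ℕ → ℕ := fun m => DW W G m - m * e with hfdef
  have hfstep : ∀ m, M0 ≤ m → f (m + 1) ≤ f m := by
    intro m hm
    have h1 := hstep m hm
    have : (m + 1) * e = m * e + e := by ring
    simp only [hfdef]
    omega
  have hfanti : ∀ m, M0 ≤ m → ∀ k, f (m + k) ≤ f m := by
    intro m hm k
    induction k with
    | zero => simp
    | succ k ih =>
      have : f (m + k + 1) ≤ f (m + k) := hfstep (m + k) (by omega)
      have h2 : m + (k + 1) = m + k + 1 := by ring
      rw [h2]
      omega
  -- the eventual constant value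
  set T : Set ℕ := {k | ∃ m, M0 ≤ m ∧ f m = k} with hTdef
  have hTne : T.Nonempty := ⟨f M0, M0, le_refl _, rfl⟩
  obtain ⟨m1, hm1, hfm1⟩ : ∃ m, M0 ≤ m ∧ f m = sInf T := Nat.sInf_mem hTne
  refine ⟨m1, ((sInf T : ℕ) : ℤ), ?_⟩
  intro m hm
  have hle : f m ≤ sInf T := by
    have := hfanti m1 hm1 (m - m1)
    rw [show m1 + (m - m1) = m by omega] at this
    omega
  have hge : sInf T ≤ f m := Nat.sInf_le ⟨m, by omega, rfl⟩
  have hfm : f m = sInf T := le_antisymm hle hge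
  have hDge : m * e ≤ DW W G m := DW_ge hW m
  have hD : DW W G m = sInf T + m * e := by
    simp only [hfdef] at hfm
    omega
  rw [hD]
  push_cast
  ring
end

section
/- Let G be a finite abelian group and W ⊆ ℤ a nonempty set of weights. If d < e_W(G) then s_{W,≤d}(G) = ∞ (i.e., for every n there is a sequence over G of length n with no W-weighted zero-subsum of length at most d), and if d ≥ e_W(G) then s_{W,≤d}(G) ≤ (e_W(G)−1)·|G| + 1. -/
open scoped BigOperators

open AddMonoid in
private lemma eW_mem (W : Set ℤ) (G : Type*) [AddCommGroup G] [Fintype G] (hW : W.Nonempty) :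
    1 ≤ eW W G ∧ ∃ w : Fin (eW W G) → ℤ, (∀ i, w i ∈ W) ∧
      ((AddMonoid.exponent G : ℤ) ∣ ∑ i, w i) := by
  obtain ⟨w0, hw0⟩ := hW
  have hee : AddMonoid.ExponentExists G := AddMonoid.ExponentExists.of_finite
  have : AddMonoid.exponent G ∈ {t : ℕ | 1 ≤ t ∧ ∃ w : Fin t → ℤ, (∀ i, w i ∈ W) ∧
      ((AddMonoid.exponent G : ℤ) ∣ ∑ i, w i)} := by
    refine ⟨hee.exponent_pos, fun _ => w0, fun i => hw0, ?_⟩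
    simp [Finset.sum_const, mul_comm]
  exact Nat.sInf_mem ⟨_, this⟩

private lemma sum_map_smul_const {G : Type*} [AddCommGroup G] (l : List (ℤ × G)) (g : G)
    (h : ∀ p ∈ l, p.2 = g) :
    (l.map fun p => p.1 • p.2).sum = (l.map Prod.fst).sum • g := by
  induction l with
  | nil => simp
  | cons p l ih =>
    simp only [List.map_cons, List.sum_cons, add_smul, ih (fun q hq => h q (by simp [hq])),
      h p (by simp)]

private lemma sum_fst_eq {G : Type*} [AddCommGroup G] (l : List (ℤ × G)) :
    ∑ i : Fin l.length, (l.get i).1 = (l.map Prod.fst).sum := by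
  induction l with
  | nil => simp
  | cons p l ih =>
    rw [List.map_cons, List.sum_cons, ← ih]
    simp only [List.length_cons]
    rw [Fin.sum_univ_succ]
    rfl

/-- `s_{W,≤d}(G) = ∞` for `d < e_W(G)` and
`s_{W,≤d}(G) ≤ (e_W(G)-1)|G| + 1` for `d ≥ e_W(G)`. -/
theorem stmt1 {G : Type*} [AddCommGroup G] [Fintype G] (W : Set ℤ) (hW : W.Nonempty)
    (d : ℕ) :
    (d < eW W G → sWle W G d = ⊤) ∧
    (eW W G ≤ d → sWle W G d ≤ (((eW W G - 1) * Fintype.card G + 1 : ℕ) : ℕ∞)) := by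
  classical
  obtain ⟨he1, w, hwW, hwsum⟩ := eW_mem W G hW
  have hee : AddMonoid.ExponentExists G := AddMonoid.ExponentExists.of_finite
  constructor
  · intro hd
    obtain ⟨g, hg⟩ := AddMonoid.exists_addOrderOf_eq_exponent hee
    have hset : {N : ℕ∞ | ∃ n : ℕ, N = (n : ℕ∞) ∧
        ∀ S : Multiset G, n ≤ Multiset.card S →
          HasWZeroSubsumLen W S {t | 1 ≤ t ∧ t ≤ d}} = ∅ := by
      rw [Set.eq_empty_iff_forall_notMem]
      rintro N ⟨n, -, hn⟩
      obtain ⟨l, ⟨hne, hlW, hle, hsum⟩, ht1, htd⟩ :=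
        hn (Multiset.replicate n g) (by simp)
      have hall : ∀ p ∈ l, p.2 = g := by
        intro p hp
        exact Multiset.eq_of_mem_replicate
          (Multiset.mem_of_le hle (Multiset.mem_coe.mpr (List.mem_map_of_mem (f := Prod.snd) hp)))
      rw [sum_map_smul_const l g hall] at hsum
      have hdvd : (AddMonoid.exponent G : ℤ) ∣ (l.map Prod.fst).sum := by
        rw [← hg]; exact addOrderOf_dvd_iff_zsmul_eq_zero.mpr hsum
      have hmem : l.length ∈ {t : ℕ | 1 ≤ t ∧ ∃ w : Fin t → ℤ, (∀ i, w i ∈ W) ∧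
          ((AddMonoid.exponent G : ℤ) ∣ ∑ i, w i)} := by
        refine ⟨ht1, fun i => (l.get i).1, fun i => hlW _ (l.get_mem i), ?_⟩
        rw [sum_fst_eq]; exact hdvd
      have hle' : eW W G ≤ l.length := Nat.sInf_le hmem
      omega
    rw [sWle, sWL, hset, sInf_empty]
  · intro hd
    refine sInf_le ⟨(eW W G - 1) * Fintype.card G + 1, rfl, ?_⟩
    intro S hS
    have hcard : Multiset.card S = ∑ g : G, S.count g := by
      rw [← Multiset.toFinset_sum_count_eq S]
      exact Finset.sum_subset (Finset.subset_univ _)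
        (fun x _ hx => Multiset.count_eq_zero.mpr (by simpa using hx))
    have hex : ∃ g : G, eW W G ≤ S.count g := by
      by_contra h
      push_neg at h
      have h1 : ∑ g : G, S.count g ≤ ∑ _g : G, (eW W G - 1) :=
        Finset.sum_le_sum fun g _ => by have := h g; omega
      rw [Finset.sum_const, Finset.card_univ, smul_eq_mul, mul_comm] at h1
      omega
    obtain ⟨g, hg⟩ := hex
    refine ⟨List.ofFn (fun i : Fin (eW W G) => (w i, g)), ⟨?_, ?_, ?_, ?_⟩, ?_⟩
    · simp only [ne_eq, List.ofFn_eq_nil_iff]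
      omega
    · intro p hp
      simp only [List.mem_ofFn, Set.mem_range] at hp
      obtain ⟨i, rfl⟩ := hp
      exact hwW i
    · have h2 : (List.ofFn fun i : Fin (eW W G) => (w i, g)).map Prod.snd =
          List.replicate (eW W G) g := by
        simp [List.map_ofFn, Function.comp_def]
      rw [h2]
      exact Multiset.le_count_iff_replicate_le.mp hg
    · rw [List.map_ofFn]
      have h3 : (List.ofFn ((fun p : ℤ × G => p.1 • p.2) ∘
          fun i : Fin (eW W G) => (w i, g))).sum = (∑ i, w i) • g := by
        rw [List.sum_ofFn]
        simp [Function.comp_def, Finset.sum_smul]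
      rw [h3]
      obtain ⟨k, hk⟩ := hwsum
      rw [hk, mul_smul, natCast_zsmul, AddMonoid.exponent_nsmul_eq_zero]
    · simpa using ⟨he1, hd⟩
end

section
/- Let G be a finite abelian group and W ⊆ ℤ a nonempty set of weights. Let d, ℓ ∈ ℕ with d ≥ 2 and ℓ ≤ s_{W,≤d−1}(G). Then D_{W,⌈ℓ/d⌉}(G) ≥ ℓ. In particular, for each m ∈ ℕ one has D_{W,m}(G) ≥ m·e_W(G). -/
open scoped BigOperators

section
variable {G : Type*} [AddCommGroup G] [Fintype G]

lemma flatten_replicate' {α : Type*} (a : α) (m n : ℕ) :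
    (List.replicate m (List.replicate n a)).flatten = List.replicate (m * n) a := by
  induction m with
  | zero => simp
  | succ k ih =>
    rw [List.replicate_succ, List.flatten_cons, ih, ← List.replicate_add]
    congr 1
    ring

lemma sum_smul_list (g : G) : ∀ lw : List ℤ, (lw.map (fun w => w • g)).sum = lw.sum • g := by
  intro lw
  induction lw with
  | nil => simp
  | cons a t ih => simp [ih, add_smul]

lemma count_len {α : Type*} (ls : List (List α)) (d : ℕ) (h : ∀ l ∈ ls, d ≤ l.length) :
    ls.length * d ≤ ls.flatten.length := by
  rw [List.length_flatten]
  calc ls.length * d = (ls.map fun _ => d).sum := by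
        simp [List.map_const', List.sum_replicate, smul_eq_mul]
    _ ≤ (ls.map List.length).sum := List.sum_le_sum h

lemma dw_long (W : Set ℤ) (hW : W.Nonempty) (m : ℕ) :
    ∀ S : Multiset G, m * AddMonoid.exponent G * Fintype.card G ≤ Multiset.card S →
      HasDisjointWZeroSubsums W S m := by
  classical
  obtain ⟨w, hw⟩ := hW
  intro S hS
  rcases Nat.eq_zero_or_pos m with rfl | hm
  · exact ⟨[], rfl, by simp, by simp⟩
  set e := AddMonoid.exponent G with he
  have he0 : 0 < e := Nat.pos_of_ne_zero AddMonoid.exponent_ne_zero_of_finite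
  have hc0 : 0 < Fintype.card G := Fintype.card_pos
  have hex : ∃ g : G, m * e ≤ S.count g := by
    by_contra h
    push_neg at h
    have h1 : Multiset.card S = ∑ a ∈ S.toFinset, S.count a :=
      (Multiset.toFinset_sum_count_eq S).symm
    have h2 : ∑ a ∈ S.toFinset, S.count a ≤ ∑ _a ∈ S.toFinset, (m * e - 1) :=
      Finset.sum_le_sum (fun a _ => Nat.le_sub_one_of_lt (h a))
    have h3 : ∑ _a ∈ S.toFinset, (m * e - 1) = S.toFinset.card * (m * e - 1) := by
      simp [Finset.sum_const, smul_eq_mul]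
    have h4 : S.toFinset.card ≤ Fintype.card G := Finset.card_le_univ _
    have h5 : Fintype.card G * (m * e - 1) < Fintype.card G * (m * e) :=
      (Nat.mul_lt_mul_left hc0).mpr (Nat.sub_lt (Nat.mul_pos hm he0) one_pos)
    have h6 : m * e * Fintype.card G ≤ Multiset.card S := hS
    have h7 : S.toFinset.card * (m * e - 1) ≤ Fintype.card G * (m * e - 1) :=
      Nat.mul_le_mul_right _ h4
    have := Nat.mul_comm (m*e) (Fintype.card G)
    omega
  obtain ⟨g, hg⟩ := hex
  refine ⟨List.replicate m (List.replicate e (w, g)), by simp, ?_, ?_⟩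
  · intro l hl
    rw [List.eq_of_mem_replicate hl]
    refine ⟨by simp [he0.ne'], ?_, ?_⟩
    · intro p hp
      rw [List.eq_of_mem_replicate hp]
      exact hw
    · rw [List.map_replicate, List.sum_replicate]
      exact AddMonoid.exponent_nsmul_eq_zero (w • g)
  · rw [flatten_replicate', List.map_replicate]
    rw [Multiset.le_iff_count]
    intro a
    by_cases ha : a = g
    · subst ha
      simpa [Multiset.coe_replicate, Multiset.count_replicate] using hg
    · rw [Multiset.coe_replicate, Multiset.count_replicate, if_neg (fun h => ha h.symm)]
      exact Nat.zero_le _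

end

/-- if `d ≥ 2` and `ℓ ≤ s_{W,≤d-1}(G)` then `D_{W,⌈ℓ/d⌉}(G) ≥ ℓ`;
in particular `D_{W,m}(G) ≥ m·e_W(G)` for each `m`. -/
theorem stmt3 {G : Type*} [AddCommGroup G] [Fintype G] (W : Set ℤ) (hW : W.Nonempty) :
    (∀ d ℓ : ℕ, 2 ≤ d → 1 ≤ ℓ → (ℓ : ℕ∞) ≤ sWle W G (d - 1) →
      ℓ ≤ DW W G ((ℓ + d - 1) / d)) ∧
    (∀ m : ℕ, 1 ≤ m → m * eW W G ≤ DW W G m) := by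
  constructor
  · intro d ℓ hd hℓ hle
    -- extract a long sequence with no short zero-subsum
    have hnot : ¬ (∀ S : Multiset G, ℓ - 1 ≤ Multiset.card S →
        HasWZeroSubsumLen W S {t | 1 ≤ t ∧ t ≤ d - 1}) := by
      intro hP
      have hmem : (((ℓ - 1 : ℕ) : ℕ∞)) ∈ {N : ℕ∞ | ∃ n : ℕ, N = (n : ℕ∞) ∧
          ∀ S : Multiset G, n ≤ Multiset.card S →
            HasWZeroSubsumLen W S {t | 1 ≤ t ∧ t ≤ d - 1}} := ⟨ℓ - 1, rfl, hP⟩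
      have h1 : sWle W G (d - 1) ≤ ((ℓ - 1 : ℕ) : ℕ∞) := sInf_le hmem
      have h2 : (ℓ : ℕ∞) ≤ ((ℓ - 1 : ℕ) : ℕ∞) := le_trans hle h1
      rw [Nat.cast_le] at h2
      omega
    push_neg at hnot
    obtain ⟨S, hScard, hSno⟩ := hnot
    -- trim to length ℓ - 1
    set T : Multiset G := ((S.toList.take (ℓ - 1) : List G) : Multiset G) with hT
    have hTcard : Multiset.card T = ℓ - 1 := by
      simp only [hT, Multiset.coe_card, List.length_take]
      rw [Multiset.length_toList]
      omega
    have hTle : T ≤ S := by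
      have h1 : List.Subperm (S.toList.take (ℓ - 1)) S.toList :=
        (List.take_sublist _ _).subperm
      have h2 : T ≤ (S.toList : Multiset G) := Multiset.coe_le.mpr h1
      rwa [Multiset.coe_toList] at h2
    have hTno : ¬ HasWZeroSubsumLen W T {t | 1 ≤ t ∧ t ≤ d - 1} := by
      intro ⟨l, ⟨hne, hwts, hsub, hsum⟩, hlen⟩
      exact hSno ⟨l, ⟨hne, hwts, le_trans hsub hTle, hsum⟩, hlen⟩
    -- lower bound for DW
    set m : ℕ := (ℓ + d - 1) / d with hm
    have hmd : ℓ ≤ m * d := by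
      have h1 : d * ((ℓ + d - 1) / d) + (ℓ + d - 1) % d = ℓ + d - 1 := Nat.div_add_mod _ _
      have h2 : (ℓ + d - 1) % d < d := Nat.mod_lt _ (by omega)
      have h3 : m * d = d * ((ℓ + d - 1) / d) := by rw [hm, Nat.mul_comm]
      omega
    refine le_csInf ⟨m * AddMonoid.exponent G * Fintype.card G, dw_long W hW m⟩ ?_
    intro b hb
    by_contra hbl
    push_neg at hbl
    obtain ⟨ls, hlslen, hprops, hflat⟩ := hb T (by omega)
    have hdlen : ∀ l ∈ ls, d ≤ l.length := by
      intro l hl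
      obtain ⟨hne, hwts, hsum⟩ := hprops l hl
      have hsub : (↑(l.map Prod.snd) : Multiset G) ≤ T := by
        have h1 : List.Subperm (l.map Prod.snd) (ls.flatten.map Prod.snd) :=
          ((List.sublist_flatten_of_mem hl).map Prod.snd).subperm
        exact le_trans (Multiset.coe_le.mpr h1) hflat
      have h1 : 1 ≤ l.length := List.length_pos_iff.mpr hne
      have h2 : ¬ (1 ≤ l.length ∧ l.length ≤ d - 1) := by
        intro hcon
        exact hTno ⟨l, ⟨hne, hwts, hsub, hsum⟩, hcon⟩
      omega
    have hcount : m * d ≤ ls.flatten.length := by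
      have h := count_len ls d hdlen
      rwa [hlslen] at h
    have hfl : ls.flatten.length ≤ Multiset.card T := by
      have h := Multiset.card_le_card hflat
      rwa [Multiset.coe_card, List.length_map] at h
    omega
  · intro m hm
    rcases Nat.eq_zero_or_pos (eW W G) with h0 | hpos
    · simp [h0]
    have hmem : eW W G ∈ {t : ℕ | 1 ≤ t ∧ ∃ w : Fin t → ℤ, (∀ i, w i ∈ W) ∧
        ((AddMonoid.exponent G : ℤ) ∣ ∑ i, w i)} :=
      Nat.sInf_mem (Nat.nonempty_of_pos_sInf hpos)
    set e : ℕ := eW W G with he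
    have hexp : AddMonoid.ExponentExists G :=
      AddMonoid.exponent_pos.mp (Nat.pos_of_ne_zero AddMonoid.exponent_ne_zero_of_finite)
    obtain ⟨g, hg⟩ := AddMonoid.exists_addOrderOf_eq_exponent hexp
    set T : Multiset G := Multiset.replicate (m * e - 1) g with hT
    have hTcard : Multiset.card T = m * e - 1 := by simp [hT]
    refine le_csInf ⟨m * AddMonoid.exponent G * Fintype.card G, dw_long W hW m⟩ ?_
    intro b hb
    by_contra hbl
    push_neg at hbl
    obtain ⟨ls, hlslen, hprops, hflat⟩ := hb T (by omega)
    have helen : ∀ l ∈ ls, e ≤ l.length := by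
      intro l hl
      obtain ⟨hne, hwts, hsum⟩ := hprops l hl
      have hall : ∀ p ∈ l, p.2 = g := by
        intro p hp
        have h1 : p.2 ∈ (↑(ls.flatten.map Prod.snd) : Multiset G) := by
          simp only [Multiset.mem_coe, List.mem_map]
          exact ⟨p, List.mem_flatten.mpr ⟨l, hl, hp⟩, rfl⟩
        have h2 := Multiset.mem_of_le hflat h1
        exact Multiset.eq_of_mem_replicate h2
      have hsum2 : ((l.map Prod.fst).sum) • g = 0 := by
        rw [← sum_smul_list, List.map_map, ← hsum]
        exact congrArg List.sum (List.map_congr_left fun p hp => by simp [hall p hp])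
      have hdvd : ((AddMonoid.exponent G : ℤ)) ∣ (l.map Prod.fst).sum := by
        rw [← hg]
        exact addOrderOf_dvd_iff_zsmul_eq_zero.mpr hsum2
      have hmem2 : l.length ∈ {t : ℕ | 1 ≤ t ∧ ∃ w : Fin t → ℤ, (∀ i, w i ∈ W) ∧
          ((AddMonoid.exponent G : ℤ) ∣ ∑ i, w i)} := by
        refine ⟨List.length_pos_iff.mpr hne, fun i => (l.get i).1, fun i => hwts _ (l.get_mem _), ?_⟩
        have : ∑ i : Fin l.length, (l.get i).1 = (l.map Prod.fst).sum := by
          simpa using Fin.sum_univ_get' l Prod.fst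
        rw [this]
        exact hdvd
      exact Nat.sInf_le hmem2
    have hcount : m * e ≤ ls.flatten.length := by
      have h := count_len ls e helen
      rwa [hlslen] at h
    have hfl : ls.flatten.length ≤ Multiset.card T := by
      have h := Multiset.card_le_card hflat
      rwa [Multiset.coe_card, List.length_map] at h
    have : 1 ≤ m * e := Nat.one_le_iff_ne_zero.mpr (by positivity)
    omega
end

section
/- Let G be a finite abelian group, W ⊆ ℤ a nonempty set of weights, and m ∈ ℕ. Then D_{W,m+1}(G) ≤ min over all d ∈ ℕ of max{ D_{W,m}(G) + d , s_{W,≤d}(G) } (where terms with s_{W,≤d}(G) = ∞ are discarded, i.e., the inequality holds for every d with s_{W,≤d}(G) finite). -/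
open scoped BigOperators

lemma cons_disjoint {G : Type*} [AddCommGroup G] [DecidableEq G] (W : Set ℤ) (S : Multiset G)
    (l : List (ℤ × G)) (hne : l ≠ []) (hw : ∀ p ∈ l, p.1 ∈ W)
    (hsum : (l.map fun p => p.1 • p.2).sum = 0)
    (hle : (↑(l.map Prod.snd) : Multiset G) ≤ S) (m : ℕ)
    (h : HasDisjointWZeroSubsums W (S - (↑(l.map Prod.snd) : Multiset G)) m) :
    HasDisjointWZeroSubsums W S (m + 1) := by
  obtain ⟨ls, hlen, hprops, hsub⟩ := h
  refine ⟨l :: ls, by simp [hlen], ?_, ?_⟩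
  · rintro l' hl'
    rcases List.mem_cons.mp hl' with rfl | hl'
    · exact ⟨hne, hw, hsum⟩
    · exact hprops l' hl'
  · have : (↑((l :: ls).flatten.map Prod.snd) : Multiset G)
        = ↑(l.map Prod.snd) + ↑(ls.flatten.map Prod.snd) := by
      simp
    rw [this]
    calc (↑(l.map Prod.snd) : Multiset G) + ↑(ls.flatten.map Prod.snd)
        ≤ ↑(l.map Prod.snd) + (S - (↑(l.map Prod.snd) : Multiset G)) := add_le_add le_rfl hsub
      _ = S := add_tsub_cancel_of_le hle

lemma step {G : Type*} [AddCommGroup G] [DecidableEq G] (W : Set ℤ) (d n : ℕ)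
    (hn : ∀ S : Multiset G, n ≤ Multiset.card S →
      HasWZeroSubsumLen W S {t | 1 ≤ t ∧ t ≤ d}) :
    ∀ m : ℕ, ∀ S : Multiset G, n + m * d ≤ Multiset.card S →
      HasDisjointWZeroSubsums W S m := by
  intro m
  induction m with
  | zero => intro S _; exact ⟨[], rfl, by simp, by simp⟩
  | succ m ih =>
    intro S hS
    obtain ⟨l, ⟨hne, hw, hle, hsum⟩, h1, h2⟩ := hn S (by omega)
    have hcard : Multiset.card (↑(l.map Prod.snd) : Multiset G) = l.length := by simp
    have hT : n + m * d ≤ Multiset.card (S - (↑(l.map Prod.snd) : Multiset G)) := by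
      rw [Multiset.card_sub hle, hcard]
      have h5 := Multiset.card_le_card hle
      rw [hcard] at h5
      have hb : (m + 1) * d = m * d + d := by ring
      rw [hb] at hS
      omega
    exact cons_disjoint W S l hne hw hsum hle m (ih _ hT)

/-- `D_{W,m+1}(G) ≤ max{D_{W,m}(G) + d, s_{W,≤d}(G)}` for every `d ∈ ℕ`
(the inequality in `ℕ∞` automatically discards the terms with `s_{W,≤d}(G) = ∞`). -/
theorem stmt4 {G : Type*} [AddCommGroup G] [Fintype G] (W : Set ℤ) (hW : W.Nonempty)
    (m : ℕ) :
    ∀ d : ℕ, 1 ≤ d →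
      ((DW W G (m + 1) : ℕ) : ℕ∞) ≤ max ((DW W G m + d : ℕ) : ℕ∞) (sWle W G d) := by
  intro d hd
  classical
  by_cases htop : sWle W G d = ⊤
  · rw [htop]; exact le_top.trans (le_max_right _ _)
  · set P : ℕ → Prop := fun n => ∀ S : Multiset G, n ≤ Multiset.card S →
      HasWZeroSubsumLen W S {t | 1 ≤ t ∧ t ≤ d} with hP
    have hPne : {n : ℕ | P n}.Nonempty := by
      by_contra h
      apply htop
      rw [sWle, sWL]
      convert (sInf_empty (α := ℕ∞))
      · rfl
      rw [Set.eq_empty_iff_forall_notMem]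
      rintro N ⟨n, rfl, hn⟩
      exact h ⟨n, hn⟩
    set n₀ := sInf {n : ℕ | P n} with hn₀
    have hP0 : P n₀ := Nat.sInf_mem hPne
    have heq : sWle W G d = (n₀ : ℕ∞) := by
      apply le_antisymm
      · exact sInf_le ⟨n₀, rfl, hP0⟩
      · apply le_sInf
        rintro N ⟨n, rfl, hn⟩
        exact_mod_cast Nat.sInf_le (show n ∈ {n : ℕ | P n} from hn)
    -- DW m is in its defining set
    set A : ℕ → Set ℕ := fun k => {n : ℕ | ∀ S : Multiset G,
      n ≤ Multiset.card S → HasDisjointWZeroSubsums W S k} with hA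
    have hAne : ∀ k, (A k).Nonempty := fun k => ⟨n₀ + k * d, step W d n₀ hP0 k⟩
    have hDWm : DW W G m ∈ A m := Nat.sInf_mem (hAne m)
    have hmem : max (DW W G m + d) n₀ ∈ A (m + 1) := by
      intro S hS
      obtain ⟨l, ⟨hne, hw, hle, hsum⟩, h1, h2⟩ := hP0 S (le_trans (le_max_right _ _) hS)
      have hcard : Multiset.card (↑(l.map Prod.snd) : Multiset G) = l.length := by simp
      have hT : DW W G m ≤ Multiset.card (S - (↑(l.map Prod.snd) : Multiset G)) := by
        rw [Multiset.card_sub hle, hcard]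
        have h3 := Multiset.card_le_card hle
        rw [hcard] at h3
        have h4 := le_trans (le_max_left _ _) hS
        omega
      exact cons_disjoint W S l hne hw hsum hle m (hDWm _ hT)
    have hfin : DW W G (m + 1) ≤ max (DW W G m + d) n₀ := Nat.sInf_le hmem
    rw [heq]
    rcases max_cases (DW W G m + d) n₀ with ⟨he, _⟩ | ⟨he, _⟩ <;> rw [he] at hfin
    · exact le_trans (by exact_mod_cast hfin) (le_max_left _ _)
    · exact le_trans (by exact_mod_cast hfin) (le_max_right _ _)
end

section
/- Let G be a finite abelian group, W ⊆ ℤ a nonempty set of weights, H a subgroup of G, and let m, m₁, m₂ ∈ ℕ with m ≥ m₁ + m₂ − 1. Then D_{W,m}(G) ≥ D_{W,m₁}(H) + D_{W,m₂}(G/H) − 1. -/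
open scoped BigOperators

section Stmt5Aux

variable {G : Type*} [AddCommGroup G] {W : Set ℤ}

private lemma hasDisjoint_of_long {S : Multiset G} {m : ℕ} (ls : List (List (ℤ × G)))
    (hlen : m ≤ ls.length)
    (hprop : ∀ l ∈ ls, l ≠ [] ∧ (∀ p ∈ l, p.1 ∈ W) ∧ (l.map fun p => p.1 • p.2).sum = 0)
    (hle : (↑(ls.flatten.map Prod.snd) : Multiset G) ≤ S) :
    HasDisjointWZeroSubsums W S m := by
  refine ⟨ls.take m, by simpa using hlen, fun l hl => hprop l (List.take_subset _ _ hl), ?_⟩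
  refine le_trans ?_ hle
  conv_rhs => rw [← List.take_append_drop m ls]
  rw [List.flatten_append, List.map_append]
  exact Multiset.coe_le.mpr (List.sublist_append_left _ _).subperm

private lemma exists_bound [Finite G] (hW : W.Nonempty) (m : ℕ) :
    ∀ S : Multiset G, m * (Nat.card G * AddMonoid.exponent G) ≤ Multiset.card S →
      HasDisjointWZeroSubsums W S m := by
  classical
  obtain ⟨w, hw⟩ := hW
  have hexp : 0 < AddMonoid.exponent G := AddMonoid.ExponentExists.of_finite.exponent_pos
  have hcard : 0 < Nat.card G := Nat.card_pos
  induction m with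
  | zero => intro S _; exact ⟨[], rfl, by simp, by simp⟩
  | succ m ih =>
    intro S hS
    set e := AddMonoid.exponent G with he
    set K := Nat.card G * e with hK
    have hg : ∃ g : G, e ≤ S.count g := by
      by_contra hcon
      push_neg at hcon
      have h1 : Multiset.card S = ∑ a ∈ S.toFinset, S.count a :=
        (Multiset.toFinset_sum_count_eq S).symm
      have h2 : ∑ a ∈ S.toFinset, S.count a ≤ S.toFinset.card * (e - 1) := by
        calc ∑ a ∈ S.toFinset, S.count a ≤ S.toFinset.card • (e - 1) :=
              Finset.sum_le_card_nsmul _ _ _ (fun x _ => by have := hcon x; omega)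
          _ = S.toFinset.card * (e - 1) := by rw [smul_eq_mul]
      have h3 : S.toFinset.card ≤ Nat.card G := by
        have := Fintype.ofFinite G
        simpa [Nat.card_eq_fintype_card] using Finset.card_le_univ S.toFinset
      have h5 : K ≤ (m + 1) * K := Nat.le_mul_of_pos_left _ (by omega)
      have key : Nat.card G * e ≤ Nat.card G * (e - 1) := by
        calc Nat.card G * e = K := rfl
          _ ≤ (m + 1) * K := h5
          _ ≤ Multiset.card S := hS
          _ = ∑ a ∈ S.toFinset, S.count a := h1
          _ ≤ S.toFinset.card * (e - 1) := h2
          _ ≤ Nat.card G * (e - 1) := Nat.mul_le_mul_right _ h3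
      have key2 : Nat.card G * (e - 1) < Nat.card G * e :=
        (Nat.mul_lt_mul_left hcard).mpr (by omega)
      omega
    obtain ⟨g, hg⟩ := hg
    set l : List (ℤ × G) := List.replicate e (w, g) with hl
    have hsum : (l.map fun p => p.1 • p.2).sum = 0 := by
      rw [hl, List.map_replicate, List.sum_replicate]
      show e • (w • g) = 0
      rw [smul_comm, AddMonoid.exponent_nsmul_eq_zero, smul_zero]
    have hsndeq : (↑(l.map Prod.snd) : Multiset G) = Multiset.replicate e g := by
      rw [hl, List.map_replicate]
      exact Multiset.coe_replicate e g
    have hsnd : (↑(l.map Prod.snd) : Multiset G) ≤ S := by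
      rw [hsndeq]
      refine Multiset.le_iff_count.mpr fun a => ?_
      rw [Multiset.count_replicate]
      split
      · next h => rw [← h]; exact hg
      · exact Nat.zero_le _
    have hcardsub : m * K ≤ Multiset.card (S - (↑(l.map Prod.snd) : Multiset G)) := by
      rw [Multiset.card_sub hsnd, hsndeq, Multiset.card_replicate]
      have h6 : (m + 1) * K = m * K + K := by ring
      have h7 : e ≤ K := by
        calc e = 1 * e := (one_mul e).symm
          _ ≤ Nat.card G * e := Nat.mul_le_mul_right _ hcard
      omega
    obtain ⟨ls, hlen, hprop, hle⟩ := ih _ hcardsub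
    refine ⟨l :: ls, by simp [hlen], ?_, ?_⟩
    · rintro l' hl'
      rcases List.mem_cons.mp hl' with rfl | h
      · refine ⟨?_, ?_, hsum⟩
        · rw [hl]
          intro hnil
          have := congrArg List.length hnil
          simp at this
          omega
        · intro p hp
          rw [hl] at hp
          rw [List.eq_of_mem_replicate hp]
          exact hw
      · exact hprop l' h
    · rw [List.flatten_cons, List.map_append]
      have : (↑(List.map Prod.snd l ++ List.map Prod.snd ls.flatten) : Multiset G)
          = (↑(List.map Prod.snd ls.flatten) : Multiset G) + ↑(List.map Prod.snd l) := by
        rw [← Multiset.coe_add]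
        exact Multiset.coe_eq_coe.mpr (List.perm_append_comm)
      rw [this]
      exact (le_tsub_iff_right hsnd).mp hle

private lemma lt_DW_of_not [Finite G] (hW : W.Nonempty) {m : ℕ} {S : Multiset G}
    (h : ¬ HasDisjointWZeroSubsums W S m) : Multiset.card S < DW W G m := by
  by_contra h'
  push_neg at h'
  have hne : {n : ℕ | ∀ S : Multiset G, n ≤ Multiset.card S →
      HasDisjointWZeroSubsums W S m}.Nonempty :=
    ⟨m * (Nat.card G * AddMonoid.exponent G), fun S hS => exists_bound hW m S hS⟩
  exact h (Nat.sInf_mem hne S h')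

private lemma one_le_DW [Finite G] (hW : W.Nonempty) {m : ℕ} (hm : 1 ≤ m) :
    1 ≤ DW W G m := by
  have : ¬ HasDisjointWZeroSubsums W (0 : Multiset G) m := by
    rintro ⟨ls, hlen, hprop, hle⟩
    have hls : ls ≠ [] := by
      intro h; rw [h] at hlen; simp at hlen; omega
    obtain ⟨l, hl⟩ := List.exists_mem_of_ne_nil ls hls
    obtain ⟨p, hp⟩ := List.exists_mem_of_ne_nil l (hprop l hl).1
    have hmem : p.2 ∈ (↑(ls.flatten.map Prod.snd) : Multiset G) := by
      rw [Multiset.mem_coe]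
      exact List.mem_map_of_mem (f := Prod.snd) (List.mem_flatten.mpr ⟨l, hl, hp⟩)
    rw [Multiset.le_zero.mp hle] at hmem
    exact Multiset.notMem_zero _ hmem
  have := lt_DW_of_not hW this
  simpa [Nat.pos_iff_ne_zero, Nat.one_le_iff_ne_zero] using this

private lemma exists_extremal [Finite G] (hW : W.Nonempty) {m : ℕ} (hm : 1 ≤ m) :
    ∃ S : Multiset G, DW W G m ≤ Multiset.card S + 1 ∧
      ¬ HasDisjointWZeroSubsums W S m := by
  have h1 : 1 ≤ DW W G m := one_le_DW hW hm
  have h2 : DW W G m - 1 ∉ {n : ℕ | ∀ S : Multiset G, n ≤ Multiset.card S →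
      HasDisjointWZeroSubsums W S m} := by
    apply Nat.notMem_of_lt_sInf
    show DW W G m - 1 < DW W G m
    omega
  simp only [Set.mem_setOf_eq, not_forall] at h2
  obtain ⟨S, hS, hnot⟩ := h2
  exact ⟨S, by omega, hnot⟩

private lemma split_lemma (Y : Multiset G) :
    ∀ (L : List (List (ℤ × G))) (X : Multiset G),
      (↑(L.flatten.map Prod.snd) : Multiset G) ≤ X + Y →
      ∃ L' : List (List (ℤ × G)), L'.Sublist L ∧ L.length ≤ L'.length + Multiset.card Y ∧
        (↑(L'.flatten.map Prod.snd) : Multiset G) ≤ X := by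
  classical
  induction Y using Multiset.induction_on with
  | empty =>
    intro L X h
    exact ⟨L, List.Sublist.refl L, by simp, by simpa using h⟩
  | cons y Y ih =>
    intro L X h
    have hsplit : X + (y ::ₘ Y) = (X + Y) + {y} := by
      rw [← Multiset.singleton_add, add_comm {y} Y, ← add_assoc]
    rw [hsplit] at h
    by_cases h' : (↑(L.flatten.map Prod.snd) : Multiset G) ≤ X + Y
    · obtain ⟨L', h1, h2, h3⟩ := ih L X h'
      exact ⟨L', h1, by simp only [Multiset.card_cons]; omega, h3⟩
    · have hy : y ∈ (↑(L.flatten.map Prod.snd) : Multiset G) := by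
        rw [Multiset.le_iff_count] at h'
        push_neg at h'
        obtain ⟨a, ha⟩ := h'
        have hle := Multiset.le_iff_count.mp h a
        rw [Multiset.count_add, Multiset.count_singleton] at hle
        by_cases hay : a = y
        · subst hay
          rw [← Multiset.count_pos]
          omega
        · rw [if_neg hay] at hle; omega
      rw [Multiset.mem_coe] at hy
      obtain ⟨p, hpmem, hpy⟩ := List.mem_map.mp hy
      obtain ⟨l, hlmem, hpl⟩ := List.mem_flatten.mp hpmem
      obtain ⟨L₁, L₂, rfl⟩ := List.append_of_mem hlmem
      have hyl : {y} ≤ (↑(l.map Prod.snd) : Multiset G) := by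
        rw [Multiset.singleton_le, Multiset.mem_coe]
        exact hpy ▸ List.mem_map_of_mem (f := Prod.snd) hpl
      have hMeq : (↑((L₁ ++ l :: L₂).flatten.map Prod.snd) : Multiset G)
          = (↑((L₁ ++ L₂).flatten.map Prod.snd) : Multiset G) + ↑(l.map Prod.snd) := by
        rw [Multiset.coe_add]
        apply Multiset.coe_eq_coe.mpr
        have h1 : (L₁ ++ l :: L₂).flatten.Perm ((L₁ ++ L₂).flatten ++ l) := by
          have : (L₁ ++ l :: L₂).Perm ((L₁ ++ L₂) ++ [l]) := by
            refine List.Perm.trans ?_ (List.perm_append_comm (l₁ := [l]) (l₂ := L₁ ++ L₂))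
            simpa using List.perm_append_comm (l₁ := L₁) (l₂ := l :: L₂) |>.trans
              (by simpa using (List.perm_append_comm (l₁ := L₂) (l₂ := L₁)).cons l)
          have h2 := this.flatten
          simpa [List.flatten_append] using h2
        exact (h1.map Prod.snd).trans (by simp)
      have hkey : (↑((L₁ ++ L₂).flatten.map Prod.snd) : Multiset G) ≤ X + Y := by
        have h4 : (↑((L₁ ++ L₂).flatten.map Prod.snd) : Multiset G) + {y}
            ≤ (X + Y) + {y} := by
          calc (↑((L₁ ++ L₂).flatten.map Prod.snd) : Multiset G) + {y}
              ≤ (↑((L₁ ++ L₂).flatten.map Prod.snd) : Multiset G) + ↑(l.map Prod.snd) :=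
                add_le_add le_rfl hyl
            _ = (↑((L₁ ++ l :: L₂).flatten.map Prod.snd) : Multiset G) := hMeq.symm
            _ ≤ (X + Y) + {y} := h
        exact le_of_add_le_add_right h4
      obtain ⟨L', h1, h2, h3⟩ := ih (L₁ ++ L₂) X hkey
      refine ⟨L', h1.trans ((List.sublist_cons_self l L₂).append_left L₁), ?_, h3⟩
      simp only [Multiset.card_cons, List.length_append, List.length_cons] at h2 ⊢
      omega

private lemma flatten_map_filter {α β : Type*} (q : β → Bool) (f : α → β)
    (L : List (List α)) :
    (L.map (fun l => (l.map f).filter q)).flatten = ((L.flatten).map f).filter q := by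
  induction L with
  | nil => simp
  | cons l L ih => simp [List.filter_append, ih]


private lemma map_snd_filter {γ δ : Type*} (q : δ → Bool) (L : List (γ × δ)) :
    (L.filter (fun p => q p.2)).map Prod.snd = (L.map Prod.snd).filter q := by
  induction L with
  | nil => rfl
  | cons a L ih => by_cases h : q a.2 <;> simp [List.filter_cons, h, ih]

private lemma coe_filter_eq {δ : Type*} (p : δ → Prop) [DecidablePred p] (l : List δ) :
    (↑(l.filter (fun x => decide (p x))) : Multiset δ) = Multiset.filter p ↑l := by
  induction l with
  | nil => rfl
  | cons a l ih =>
    by_cases h : p a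
    · rw [List.filter_cons, if_pos (by simpa using h)]
      show (a ::ₘ ↑(l.filter fun x => decide (p x))) = _
      rw [ih, ← Multiset.cons_coe, Multiset.filter_cons_of_pos _ h]
    · rw [List.filter_cons, if_neg (by simpa using h)]
      show (↑(l.filter fun x => decide (p x)) : Multiset δ) = _
      rw [ih, ← Multiset.cons_coe, Multiset.filter_cons_of_neg _ h]

end Stmt5Aux

/-- for `m ≥ m₁ + m₂ - 1`,
`D_{W,m}(G) ≥ D_{W,m₁}(H) + D_{W,m₂}(G/H) - 1`. -/
theorem stmt5 {G : Type*} [AddCommGroup G] [Fintype G] (W : Set ℤ) (hW : W.Nonempty)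
    (H : AddSubgroup G) (m m₁ m₂ : ℕ) (hm₁ : 1 ≤ m₁) (hm₂ : 1 ≤ m₂)
    (hm : m₁ + m₂ ≤ m + 1) :
    DW W (↥H) m₁ + DW W (G ⧸ H) m₂ ≤ DW W G m + 1 := by
  classical
  obtain ⟨w₀, hw₀⟩ := hW
  have hWne : W.Nonempty := ⟨w₀, hw₀⟩
  obtain ⟨S₁, hS₁card, hS₁⟩ := exists_extremal (G := ↥H) hWne hm₁
  obtain ⟨S₂, hS₂card, hS₂⟩ := exists_extremal (G := G ⧸ H) hWne hm₂
  set π : G →+ G ⧸ H := QuotientAddGroup.mk' H with hπdef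
  set T : Multiset G := S₂.map Quotient.out with hT
  set X : Multiset G := S₁.map (fun b : ↥H => (b : G)) with hX
  have hπT : T.map π = S₂ := by
    rw [hT, Multiset.map_map]
    have : (⇑π ∘ Quotient.out) = (id : G ⧸ H → G ⧸ H) := by
      funext q
      exact Quotient.out_eq' q
    rw [this, Multiset.map_id]
  have hπX : ∀ a ∈ X, π a = Function.const G (0 : G ⧸ H) a := by
    intro a ha
    rw [hX] at ha
    obtain ⟨b, _, rfl⟩ := Multiset.mem_map.mp ha
    exact (QuotientAddGroup.eq_zero_iff _).mpr b.2
  have hXH : ∀ a ∈ X, a ∈ H := by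
    intro a ha
    rw [hX] at ha
    obtain ⟨b, _, rfl⟩ := Multiset.mem_map.mp ha
    exact b.2
  have hmain : ¬ HasDisjointWZeroSubsums W (X + T) m := by
    rintro ⟨ls, hlen, hprop, hle⟩
    set P : List (ℤ × G) → Bool := fun l => decide (∀ p ∈ l, π p.2 = 0) with hP
    set ls₁ := ls.filter P with hls₁
    set ls₂ := ls.filter (fun l => !P l) with hls₂
    have hperm : (ls₁ ++ ls₂).Perm ls := List.filter_append_perm P ls
    have hlensum : ls₁.length + ls₂.length = m := by
      have := hperm.length_eq
      simpa [hlen] using this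
    have hMsum : (↑(ls₁.flatten.map Prod.snd) : Multiset G)
        + (↑(ls₂.flatten.map Prod.snd) : Multiset G)
        = (↑(ls.flatten.map Prod.snd) : Multiset G) := by
      rw [Multiset.coe_add]
      exact Multiset.coe_eq_coe.mpr
        (by simpa [List.flatten_append] using (hperm.flatten.map Prod.snd))
    set Z : Multiset G := T.filter (fun g => g ∈ H) with hZ
    set c := Multiset.card Z with hc
    set q0 : G ⧸ H → Bool := fun x => decide (x ≠ 0) with hq0
    set q2 : ℤ × G → ℤ × (G ⧸ H) := fun p => (p.1, π p.2) with hq2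
    set f2 : List (ℤ × G) → List (ℤ × (G ⧸ H)) :=
      fun l => (l.map q2).filter (fun p => q0 p.2) with hf2
    set bigls := ls₂.map f2 ++ List.replicate c [(w₀, (0 : G ⧸ H))] with hbig
    have hqlen : ls₂.length + c < m₂ := by
      by_contra hcon
      push_neg at hcon
      apply hS₂
      apply hasDisjoint_of_long (W := W) bigls
      · rw [hbig]
        simp only [List.length_append, List.length_map, List.length_replicate]
        omega
      · intro l hl
        rw [hbig, List.mem_append] at hl
        rcases hl with hl | hl
        · obtain ⟨l₀, hl₀, rfl⟩ := List.mem_map.mp hl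
          have hl₀ls : l₀ ∈ ls := List.mem_of_mem_filter hl₀
          obtain ⟨hne, hWl, hsum⟩ := hprop l₀ hl₀ls
          have hnz : ∃ p ∈ l₀, ¬ π p.2 = 0 := by
            have h2 := (List.mem_filter.mp hl₀).2
            rw [hP] at h2
            simp only [Bool.not_eq_true', decide_eq_false_iff_not] at h2
            push_neg at h2
            exact h2
          obtain ⟨p, hpmem, hpnz⟩ := hnz
          refine ⟨?_, ?_, ?_⟩
          · intro hnil
            have hq2mem : q2 p ∈ f2 l₀ := by
              rw [hf2]
              refine List.mem_filter.mpr ⟨List.mem_map_of_mem (f := q2) hpmem, ?_⟩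
              rw [hq0]
              simpa [hq2] using hpnz
            rw [hnil] at hq2mem
            exact absurd hq2mem List.not_mem_nil
          · intro pa hpa
            have hpb := List.mem_of_mem_filter hpa
            obtain ⟨pc, hpc, rfl⟩ := List.mem_map.mp hpb
            exact hWl pc hpc
          · have hLsum : ((l₀.map q2).map fun p => p.1 • p.2).sum = 0 := by
              have hcomp : ((l₀.map q2).map fun p => p.1 • p.2)
                  = (l₀.map fun p : ℤ × G => p.1 • p.2).map ⇑π := by
                rw [List.map_map, List.map_map]
                apply List.map_congr_left
                intro p _
                show (q2 p).1 • (q2 p).2 = π (p.1 • p.2)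
                rw [hq2]
                exact (map_zsmul π p.1 p.2).symm
              rw [hcomp, ← map_list_sum π, hsum, map_zero]
            have hpermL := List.filter_append_perm (fun p : ℤ × (G ⧸ H) => q0 p.2)
              (l₀.map q2)
            have hsum2 := (hpermL.map (fun p : ℤ × (G ⧸ H) => p.1 • p.2)).sum_eq
            rw [List.map_append, List.sum_append] at hsum2
            have hzero : (((l₀.map q2).filter (fun p => !(q0 p.2))).map
                fun p : ℤ × (G ⧸ H) => p.1 • p.2).sum = 0 := by
              apply List.sum_eq_zero
              intro x hx
              obtain ⟨pd, hpd, rfl⟩ := List.mem_map.mp hx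
              have h3 := (List.mem_filter.mp hpd).2
              rw [hq0] at h3
              simp only [Bool.not_eq_true', decide_eq_false_iff_not, not_not] at h3
              rw [h3, smul_zero]
            rw [hzero, add_zero] at hsum2
            show (((l₀.map q2).filter (fun p => q0 p.2)).map
              fun p : ℤ × (G ⧸ H) => p.1 • p.2).sum = 0
            rw [hsum2]
            exact hLsum
        · have := List.eq_of_mem_replicate hl
          subst this
          exact ⟨by simp, by simp [hw₀], by simp⟩
      · have hflat1 : (↑(((ls₂.map f2).flatten).map Prod.snd) : Multiset (G ⧸ H))
            = Multiset.filter (fun x => x ≠ 0)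
              (Multiset.map (⇑π) (↑(ls₂.flatten.map Prod.snd) : Multiset G)) := by
          have e1 : (ls₂.map f2).flatten = ((ls₂.flatten).map q2).filter (fun p => q0 p.2) := by
            rw [hf2]
            exact flatten_map_filter _ q2 ls₂
          rw [e1, map_snd_filter q0]
          have e2 : (ls₂.flatten.map q2).map Prod.snd = (ls₂.flatten.map Prod.snd).map ⇑π := by
            rw [List.map_map, List.map_map]
            rfl
          rw [e2, Multiset.map_coe]
          rw [hq0]
          exact coe_filter_eq (fun x : G ⧸ H => x ≠ 0) _
        have hrep : (↑(((List.replicate c [(w₀, (0 : G ⧸ H))]).flatten).map Prod.snd)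
            : Multiset (G ⧸ H)) = Multiset.replicate c 0 := by
          rw [List.flatten_replicate_singleton, List.map_replicate]
          exact Multiset.coe_replicate _ _
        have hM₂le : (↑(ls₂.flatten.map Prod.snd) : Multiset G) ≤ X + T := by
          calc (↑(ls₂.flatten.map Prod.snd) : Multiset G)
              ≤ (↑(ls₁.flatten.map Prod.snd) : Multiset G)
                + (↑(ls₂.flatten.map Prod.snd) : Multiset G) := le_add_self
            _ = (↑(ls.flatten.map Prod.snd) : Multiset G) := hMsum
            _ ≤ X + T := hle
        have hXmap : X.map ⇑π = Multiset.replicate (Multiset.card S₁) (0 : G ⧸ H) := by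
          rw [Multiset.map_congr rfl hπX, Multiset.map_const, hX, Multiset.card_map]
        have hZmap : Z.map ⇑π = Multiset.replicate c (0 : G ⧸ H) := by
          have hZ0 : ∀ a ∈ Z, π a = Function.const G (0 : G ⧸ H) a := by
            intro a ha
            rw [hZ] at ha
            exact (QuotientAddGroup.eq_zero_iff _).mpr (Multiset.of_mem_filter ha)
          rw [Multiset.map_congr rfl hZ0, Multiset.map_const, hc]
        have h2 : Multiset.filter (fun x => x ≠ 0)
            (Multiset.map (⇑π) (↑(ls₂.flatten.map Prod.snd) : Multiset G))
            ≤ Multiset.filter (fun x => x ≠ 0) S₂ := by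
          have h1 : Multiset.map (⇑π) (↑(ls₂.flatten.map Prod.snd) : Multiset G)
              ≤ Multiset.replicate (Multiset.card S₁) (0 : G ⧸ H) + S₂ := by
            rw [← hXmap, ← hπT, ← Multiset.map_add]
            exact Multiset.map_le_map hM₂le
          refine le_trans (Multiset.filter_le_filter _ h1) ?_
          rw [Multiset.filter_add]
          have hznil : Multiset.filter (fun x => x ≠ 0)
              (Multiset.replicate (Multiset.card S₁) (0 : G ⧸ H)) = 0 := by
            rw [Multiset.filter_eq_nil]
            intro a ha
            simp [Multiset.eq_of_mem_replicate ha]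
          rw [hznil, zero_add]
        have h4 : Multiset.replicate c (0 : G ⧸ H)
            ≤ Multiset.filter (fun x => ¬ x ≠ 0) S₂ := by
          rw [← hZmap, Multiset.le_filter]
          constructor
          · rw [← hπT]
            exact Multiset.map_le_map (Multiset.filter_le _ _)
          · intro a ha
            rw [hZmap] at ha
            simp [Multiset.eq_of_mem_replicate ha]
        rw [hbig, List.flatten_append, List.map_append, ← Multiset.coe_add, hflat1, hrep]
        calc Multiset.filter (fun x => x ≠ 0)
              (Multiset.map (⇑π) (↑(ls₂.flatten.map Prod.snd) : Multiset G))
              + Multiset.replicate c (0 : G ⧸ H)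
            ≤ Multiset.filter (fun x => x ≠ 0) S₂ + Multiset.filter (fun x => ¬ x ≠ 0) S₂ :=
              add_le_add h2 h4
          _ = S₂ := Multiset.filter_add_not _ _
    have hM₁le : (↑(ls₁.flatten.map Prod.snd) : Multiset G) ≤ X + Z := by
      have h0 : (↑(ls₁.flatten.map Prod.snd) : Multiset G) ≤ X + T := by
        calc (↑(ls₁.flatten.map Prod.snd) : Multiset G)
            ≤ (↑(ls₁.flatten.map Prod.snd) : Multiset G)
              + (↑(ls₂.flatten.map Prod.snd) : Multiset G) := le_self_add
          _ = (↑(ls.flatten.map Prod.snd) : Multiset G) := hMsum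
          _ ≤ X + T := hle
      have hM₁H : ∀ a ∈ (↑(ls₁.flatten.map Prod.snd) : Multiset G), a ∈ H := by
        intro a ha
        rw [Multiset.mem_coe] at ha
        obtain ⟨p, hp, rfl⟩ := List.mem_map.mp ha
        obtain ⟨l, hl, hpl⟩ := List.mem_flatten.mp hp
        have h1 := (List.mem_filter.mp hl).2
        rw [hP] at h1
        have hall : ∀ p ∈ l, π p.2 = 0 := of_decide_eq_true h1
        exact (QuotientAddGroup.eq_zero_iff _).mp (hall p hpl)
      calc (↑(ls₁.flatten.map Prod.snd) : Multiset G)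
          = Multiset.filter (fun g => g ∈ H) (↑(ls₁.flatten.map Prod.snd) : Multiset G) :=
            (Multiset.filter_eq_self.mpr hM₁H).symm
        _ ≤ Multiset.filter (fun g => g ∈ H) (X + T) := Multiset.filter_le_filter _ h0
        _ = Multiset.filter (fun g => g ∈ H) X + Multiset.filter (fun g => g ∈ H) T :=
            Multiset.filter_add _ _ _
        _ = X + Z := by rw [Multiset.filter_eq_self.mpr hXH, hZ]
    obtain ⟨L', hsub, hlen', hXle⟩ := split_lemma Z ls₁ X hM₁le
    set lift : G → ↥H := fun g => if h : g ∈ H then (⟨g, h⟩ : ↥H) else 0 with hliftdef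
    set fH : ℤ × G → ℤ × ↥H := fun p => (p.1, lift p.2) with hfH
    have hHlen : L'.length < m₁ := by
      by_contra hcon
      push_neg at hcon
      apply hS₁
      apply hasDisjoint_of_long (W := W) (L'.map (List.map fH))
      · simpa using hcon
      · intro l hl
        obtain ⟨l₀, hl₀, rfl⟩ := List.mem_map.mp hl
        have hl₀ls₁ : l₀ ∈ ls₁ := hsub.subset hl₀
        have hl₀ls : l₀ ∈ ls := List.mem_of_mem_filter hl₀ls₁
        obtain ⟨hne, hWl, hsum⟩ := hprop l₀ hl₀ls
        have hallH : ∀ p ∈ l₀, p.2 ∈ H := by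
          have h1 := (List.mem_filter.mp hl₀ls₁).2
          rw [hP] at h1
          have hall : ∀ p ∈ l₀, π p.2 = 0 := of_decide_eq_true h1
          exact fun p hp => (QuotientAddGroup.eq_zero_iff _).mp (hall p hp)
        refine ⟨by simpa using hne, ?_, ?_⟩
        · intro p hp
          obtain ⟨pe, hpe, rfl⟩ := List.mem_map.mp hp
          exact hWl pe hpe
        · have hval : (H.subtype) (((l₀.map fH).map fun p => p.1 • p.2).sum) = 0 := by
            rw [map_list_sum]
            have hmc : (((l₀.map fH).map fun p : ℤ × ↥H => p.1 • p.2).map ⇑H.subtype)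
                = l₀.map (fun p : ℤ × G => p.1 • p.2) := by
              rw [List.map_map, List.map_map]
              apply List.map_congr_left
              intro p hp
              show H.subtype ((fH p).1 • (fH p).2) = p.1 • p.2
              rw [map_zsmul]
              rw [hfH]
              show p.1 • ((H.subtype) (lift p.2) : G) = p.1 • p.2
              rw [hliftdef]
              show p.1 • ((H.subtype) (if h : p.2 ∈ H then (⟨p.2, h⟩ : ↥H) else 0) : G)
                = p.1 • p.2
              rw [dif_pos (hallH p hp)]
              rfl
            rw [hmc, hsum]
          rw [AddSubgroup.coe_subtype] at hval
          exact Subtype.coe_injective (by simpa using hval)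
      · have e1 : ((L'.map (List.map fH)).flatten) = L'.flatten.map fH :=
          List.map_flatten.symm
        rw [e1, List.map_map]
        have e2 : L'.flatten.map (Prod.snd ∘ fH) = (L'.flatten.map Prod.snd).map lift := by
          rw [List.map_map]
          rfl
        rw [e2, ← Multiset.map_coe]
        calc Multiset.map lift (↑(L'.flatten.map Prod.snd) : Multiset G)
            ≤ Multiset.map lift X := Multiset.map_le_map hXle
          _ = S₁ := by
            rw [hX, Multiset.map_map]
            refine (Multiset.map_congr rfl ?_).trans (Multiset.map_id S₁)
            intro b _
            show lift ((b : ↥H) : G) = b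
            rw [hliftdef]
            show (if h : ((b : ↥H) : G) ∈ H then (⟨((b : ↥H) : G), h⟩ : ↥H) else 0) = b
            rw [dif_pos b.2]
    omega
  have hlt := lt_DW_of_not hWne hmain
  rw [Multiset.card_add] at hlt
  have c1 : Multiset.card X = Multiset.card S₁ := Multiset.card_map _ _
  have c2 : Multiset.card T = Multiset.card S₂ := Multiset.card_map _ _
  omega
end

section
/- Let G be a finite abelian group, W ⊆ ℤ a nonempty set of weights, H a subgroup of G, and d ∈ ℕ. Then s_{W,≤d}(G) ≥ s_{W,≤d}(H) + s_{W,≤d}(G/H) − 1 (with the convention that the right-hand side is ∞ if either summand is ∞). -/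
open scoped BigOperators

section Aux

variable {W : Set ℤ} {d : ℕ}

private lemma sWle_le_of_forall {G : Type*} [AddCommGroup G] {n : ℕ}
    (h : ∀ S : Multiset G, n ≤ Multiset.card S →
      HasWZeroSubsumLen W S {t | 1 ≤ t ∧ t ≤ d}) :
    sWle W G d ≤ (n : ℕ∞) :=
  sInf_le ⟨n, rfl, h⟩

private lemma le_sWle_of_sInf {G : Type*} [AddCommGroup G] :
    ((sInf {n : ℕ | ∀ S : Multiset G, n ≤ Multiset.card S →
      HasWZeroSubsumLen W S {t | 1 ≤ t ∧ t ≤ d}} : ℕ) : ℕ∞) ≤ sWle W G d := by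
  refine le_sInf ?_
  rintro N ⟨n, rfl, h⟩
  have : sInf {n : ℕ | ∀ S : Multiset G, n ≤ Multiset.card S →
      HasWZeroSubsumLen W S {t | 1 ≤ t ∧ t ≤ d}} ≤ n :=
    Nat.sInf_le (Set.mem_setOf_eq ▸ h)
  exact_mod_cast this

end Aux

/-- `s_{W,≤d}(G) ≥ s_{W,≤d}(H) + s_{W,≤d}(G/H) - 1`
(in `ℕ∞`, so the convention about infinite values is automatic). -/
theorem stmt6 {G : Type*} [AddCommGroup G] [Fintype G] (W : Set ℤ) (hW : W.Nonempty)
    (H : AddSubgroup G) (d : ℕ) :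
    sWle W (↥H) d + sWle W (G ⧸ H) d ≤ sWle W G d + 1 := by
  classical
  by_cases htop : sWle W G d = ⊤
  · rw [htop]
    simp
  -- The set of lengths
  set L : Set ℕ := {t | 1 ≤ t ∧ t ≤ d} with hLdef
  -- The ℕ-set for G is nonempty
  have hAne : {n : ℕ | ∀ S : Multiset G, n ≤ Multiset.card S →
      HasWZeroSubsumLen W S L}.Nonempty := by
    by_contra hcon
    apply htop
    have he : {N : ℕ∞ | ∃ n : ℕ, N = (n : ℕ∞) ∧
        ∀ S : Multiset G, n ≤ Multiset.card S → HasWZeroSubsumLen W S L} = ∅ := by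
      rw [Set.eq_empty_iff_forall_notMem]
      rintro N ⟨n, rfl, h⟩
      exact hcon ⟨n, h⟩
    show sInf _ = ⊤
    rw [he, sInf_empty]
  set n₀ : ℕ := sInf {n : ℕ | ∀ S : Multiset G, n ≤ Multiset.card S →
      HasWZeroSubsumLen W S L} with hn₀def
  have hPn₀ : ∀ S : Multiset G, n₀ ≤ Multiset.card S → HasWZeroSubsumLen W S L :=
    Nat.sInf_mem hAne
  have hn₀le : (n₀ : ℕ∞) ≤ sWle W G d := le_sWle_of_sInf
  -- d ≥ 1
  have hd : 1 ≤ d := by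
    obtain ⟨l, ⟨hne, -, -, -⟩, h1, h2⟩ :=
      hPn₀ (Multiset.replicate n₀ (0 : G)) (by simp)
    exact le_trans (by
      rcases l with _ | ⟨a, l⟩
      · exact absurd rfl hne
      · simpa using h1) h2
  obtain ⟨w, hwW⟩ := hW
  -- quotient transfer : P_{G/H} n₀
  have hPQ : ∀ T : Multiset (G ⧸ H), n₀ ≤ Multiset.card T → HasWZeroSubsumLen W T L := by
    intro T hT
    obtain ⟨l, ⟨hne, hw, hle, hsum⟩, hlen⟩ := hPn₀ (T.map (fun q : G ⧸ H => q.out)) (by simpa using hT)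
    refine ⟨l.map (fun p => (p.1, QuotientAddGroup.mk (s := H) p.2)), ⟨?_, ?_, ?_, ?_⟩,
      by simpa using hlen⟩
    · simpa using hne
    · intro p hp
      simp only [List.mem_map] at hp
      obtain ⟨q, hq, rfl⟩ := hp
      exact hw q hq
    · have : (l.map (fun p => (p.1, QuotientAddGroup.mk (s := H) p.2))).map Prod.snd
          = (l.map Prod.snd).map (QuotientAddGroup.mk (s := H)) := by
        simp [List.map_map, Function.comp]
      rw [this, ← Multiset.map_coe]
      calc Multiset.map (QuotientAddGroup.mk (s := H)) ↑(l.map Prod.snd)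
          ≤ Multiset.map (QuotientAddGroup.mk (s := H)) (T.map (fun q : G ⧸ H => q.out)) :=
            Multiset.map_le_map hle
        _ = T := by
            rw [Multiset.map_map]
            have hco : (QuotientAddGroup.mk (s := H)) ∘ (fun q : G ⧸ H => q.out) = id :=
              funext fun q => QuotientAddGroup.out_eq' q
            rw [hco, Multiset.map_id]
    · have heq : (l.map (fun p => (p.1, QuotientAddGroup.mk (s := H) p.2))).map
          (fun p => p.1 • p.2)
          = (l.map fun p => p.1 • p.2).map (QuotientAddGroup.mk' H) := by
        rw [List.map_map, List.map_map]
        refine List.map_congr_left fun p hp => ?_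
        simp [Function.comp, QuotientAddGroup.mk'_apply]
      rw [heq, ← map_list_sum, hsum, map_zero]
  -- b and a sequence T over G/H without short zero-subsums, of card ≥ b - 1
  have hBne : {n : ℕ | ∀ T : Multiset (G ⧸ H), n ≤ Multiset.card T →
      HasWZeroSubsumLen W T L}.Nonempty := ⟨n₀, hPQ⟩
  set b : ℕ := sInf {n : ℕ | ∀ T : Multiset (G ⧸ H), n ≤ Multiset.card T →
      HasWZeroSubsumLen W T L} with hbdef
  have hPb : ∀ T : Multiset (G ⧸ H), b ≤ Multiset.card T → HasWZeroSubsumLen W T L :=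
    Nat.sInf_mem hBne
  have hb1 : 1 ≤ b := by
    by_contra hcon
    push_neg at hcon
    interval_cases b
    obtain ⟨l, ⟨hne, -, hle, -⟩, -⟩ := hPb 0 (by simp)
    rcases l with _ | ⟨a, l⟩
    · exact hne rfl
    · simp only [List.map_cons] at hle
      have := Multiset.card_le_card hle
      simp at this
  have hbn₀ : b ≤ n₀ := Nat.sInf_le hPQ
  have hb1' : b - 1 ∉ {n : ℕ | ∀ T : Multiset (G ⧸ H), n ≤ Multiset.card T →
      HasWZeroSubsumLen W T L} := Nat.notMem_of_lt_sInf (by omega)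
  simp only [Set.mem_setOf_eq, not_forall] at hb1'
  obtain ⟨T, hTcard, hTno⟩ := hb1'
  -- 0 ∉ T
  have h0T : (0 : G ⧸ H) ∉ T := by
    intro h0
    exact hTno ⟨[(w, 0)], ⟨by simp, by simpa using hwW, by simpa using h0, by simp⟩,
      ⟨le_refl 1, hd⟩⟩
  -- lift of T
  set S : Multiset G := T.map (fun q : G ⧸ H => q.out) with hSdef
  have hScard : Multiset.card S = Multiset.card T := by rw [hSdef]; exact Multiset.card_map _ _
  have hSnotH : ∀ g ∈ S, g ∉ H := by
    intro g hg hgH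
    simp only [hSdef, Multiset.mem_map] at hg
    obtain ⟨t, ht, rfl⟩ := hg
    have : (QuotientAddGroup.mk (s := H) t.out) = 0 :=
      (QuotientAddGroup.eq_zero_iff _).mpr hgH
    rw [QuotientAddGroup.out_eq'] at this
    rw [this] at ht

    exact h0T ht
  -- H part : P_H (n₀ + 1 - b)
  have hPH : ∀ U : Multiset (↥H), n₀ + 1 - b ≤ Multiset.card U →
      HasWZeroSubsumLen W U L := by
    intro U hU
    set V : Multiset G := U.map (fun x : ↥H => (x : G)) + S with hVdef
    have hVcard : n₀ ≤ Multiset.card V := by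
      have : Multiset.card V = Multiset.card U + Multiset.card T := by
        simp [hVdef, hScard]
      omega
    obtain ⟨l, ⟨hne, hw, hle, hsum⟩, hlen1, hlen2⟩ := hPn₀ V hVcard
    -- filter decomposition of V
    have hVfilter : Multiset.filter (fun g => g ∈ H) V = U.map (fun x : ↥H => (x : G)) := by
      rw [hVdef, Multiset.filter_add]
      rw [Multiset.filter_eq_self.mpr, Multiset.filter_eq_nil.mpr hSnotH, add_zero]
      intro a ha
      simp only [Multiset.mem_map] at ha
      obtain ⟨x, -, rfl⟩ := ha
      exact x.2
    have hVfilter' : Multiset.filter (fun g => ¬ g ∈ H) V = S := by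
      rw [hVdef, Multiset.filter_add]
      rw [Multiset.filter_eq_nil.mpr, Multiset.filter_eq_self.mpr hSnotH, zero_add]
      intro a ha
      simp only [Multiset.mem_map] at ha
      obtain ⟨x, -, rfl⟩ := ha
      simp [x.2]
    -- all elements of l lie in H
    have hall : ∀ p ∈ l, p.2 ∈ H := by
      by_contra hcon
      push_neg at hcon
      set l₂ : List (ℤ × G) := l.filter (fun p => decide (¬ p.2 ∈ H)) with hl₂def
      have hl₂ne : l₂ ≠ [] := by
        obtain ⟨p, hp, hpH⟩ := hcon
        intro hnil
        have : p ∈ l₂ := by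
          rw [hl₂def, List.mem_filter]
          exact ⟨hp, by simpa using hpH⟩
        rw [hnil] at this
        simp at this
      -- the coe-multiset of l₂ is a filter of that of l
      have hcoel₂ : (↑l₂ : Multiset (ℤ × G)) = Multiset.filter (fun p => ¬ p.2 ∈ H) ↑l := by
        rw [Multiset.filter_coe]
      -- its snd's lie in S
      have hl₂S : (↑(l₂.map Prod.snd) : Multiset G) ≤ S := by
        rw [← Multiset.map_coe, hcoel₂]
        have : Multiset.map Prod.snd (Multiset.filter (fun p : ℤ × G => ¬ p.2 ∈ H)
              (↑l : Multiset (ℤ × G)))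
            = Multiset.filter (fun g => ¬ g ∈ H) (Multiset.map Prod.snd (↑l : Multiset (ℤ × G))) := by
          rw [Multiset.filter_map]
          rfl
        rw [this, ← hVfilter']
        refine Multiset.filter_le_filter _ ?_
        rw [Multiset.map_coe]
        exact hle
      -- sum splitting
      have hsplit : ((Multiset.filter (fun p : ℤ × G => p.2 ∈ H) ↑l).map
            (fun p => p.1 • p.2)).sum
          + ((Multiset.filter (fun p : ℤ × G => ¬ p.2 ∈ H) ↑l).map
            (fun p => p.1 • p.2)).sum = 0 := by
        rw [← Multiset.sum_add, ← Multiset.map_add, Multiset.filter_add_not,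
          Multiset.map_coe, Multiset.sum_coe, hsum]
      have hmem1 : ((Multiset.filter (fun p : ℤ × G => p.2 ∈ H) ↑l).map
          (fun p => p.1 • p.2)).sum ∈ H := by
        refine AddSubmonoid.multiset_sum_mem H.toAddSubmonoid _ ?_
        intro a ha
        simp only [Multiset.mem_map, Multiset.mem_filter] at ha
        obtain ⟨p, ⟨-, hpH⟩, rfl⟩ := ha
        exact zsmul_mem hpH p.1
      have hsum2 : QuotientAddGroup.mk' H
          (((Multiset.filter (fun p : ℤ × G => ¬ p.2 ∈ H) ↑l).map
            (fun p => p.1 • p.2)).sum) = 0 := by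
        have h1 : QuotientAddGroup.mk' H
            (((Multiset.filter (fun p : ℤ × G => p.2 ∈ H) ↑l).map
              (fun p => p.1 • p.2)).sum) = 0 :=
          (QuotientAddGroup.eq_zero_iff _).mpr hmem1
        have := congrArg (QuotientAddGroup.mk' H) hsplit
        rw [map_add, h1, zero_add, map_zero] at this
        exact this
      -- build the zero-subsum of T
      apply hTno
      refine ⟨l₂.map (fun p => (p.1, QuotientAddGroup.mk (s := H) p.2)), ⟨?_, ?_, ?_, ?_⟩,
        ?_, ?_⟩
      · simpa using hl₂ne
      · intro p hp
        simp only [List.mem_map] at hp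
        obtain ⟨q, hq, rfl⟩ := hp
        exact hw q (List.mem_of_mem_filter hq)
      · have : (l₂.map (fun p => (p.1, QuotientAddGroup.mk (s := H) p.2))).map Prod.snd
            = (l₂.map Prod.snd).map (QuotientAddGroup.mk (s := H)) := by
          simp [List.map_map, Function.comp]
        rw [this, ← Multiset.map_coe]
        calc Multiset.map (QuotientAddGroup.mk (s := H)) ↑(l₂.map Prod.snd)
            ≤ Multiset.map (QuotientAddGroup.mk (s := H)) S := Multiset.map_le_map hl₂S
          _ = T := by
              rw [hSdef, Multiset.map_map]
              have hco : (QuotientAddGroup.mk (s := H)) ∘ (fun q : G ⧸ H => q.out) = id :=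
                funext fun q => QuotientAddGroup.out_eq' q
              rw [hco, Multiset.map_id]
      · have hlist : ((l₂.map (fun p => (p.1, QuotientAddGroup.mk (s := H) p.2))).map
            (fun p => p.1 • p.2)).sum
            = ((l₂.map fun p => p.1 • p.2).map (QuotientAddGroup.mk' H)).sum := by
          rw [List.map_map, List.map_map]
          refine congrArg List.sum (List.map_congr_left fun p hp => ?_)
          simp [Function.comp, QuotientAddGroup.mk'_apply]
        rw [hlist, ← map_list_sum]
        have : (l₂.map fun p => p.1 • p.2).sum
            = ((Multiset.filter (fun p : ℤ × G => ¬ p.2 ∈ H) ↑l).map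
              (fun p => p.1 • p.2)).sum := by
          rw [← hcoel₂, Multiset.map_coe, Multiset.sum_coe]
        rw [this, hsum2]
      · have : 1 ≤ l₂.length := by
          rcases l₂ with _ | ⟨a, t⟩
          · exact absurd rfl hl₂ne
          · simp
        simpa using this
      · have : l₂.length ≤ l.length := List.length_filter_le _ _
        simp only [List.length_map]
        omega
    -- now all elements of l are in H; build the zero-subsum of U
    have hl1 : (↑(l.map Prod.snd) : Multiset G) ≤ U.map (fun x : ↥H => (x : G)) := by
      rw [← hVfilter]
      have heq : Multiset.filter (fun g => g ∈ H) (↑(l.map Prod.snd) : Multiset G)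
          = ↑(l.map Prod.snd) := by
        rw [Multiset.filter_eq_self]
        intro a ha
        rw [Multiset.mem_coe, List.mem_map] at ha
        obtain ⟨p, hp, rfl⟩ := ha
        exact hall p hp
      rw [← heq]
      exact Multiset.filter_le_filter _ hle
    set f : ℤ × G → ℤ × ↥H := fun p =>
      (p.1, if h : p.2 ∈ H then (⟨p.2, h⟩ : ↥H) else 0) with hfdef
    refine ⟨l.map f, ⟨?_, ?_, ?_, ?_⟩, ?_, ?_⟩
    · simpa using hne
    · intro p hp
      simp only [List.mem_map] at hp
      obtain ⟨q, hq, rfl⟩ := hp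
      exact hw q hq
    · rw [← Multiset.map_le_map_iff (Subtype.val_injective : Function.Injective
        (fun h : ↥H => (h : G)))]
      have h1 : Multiset.map (fun h : ↥H => (h : G)) ↑((l.map f).map Prod.snd)
          = (↑(l.map Prod.snd) : Multiset G) := by
        rw [Multiset.map_coe, List.map_map, List.map_map]
        refine congrArg _ (List.map_congr_left fun p hp => ?_)
        simp [hfdef, Function.comp, dif_pos (hall p hp)]
      rw [h1]
      exact hl1
    · have heq : l.map ((⇑H.subtype ∘ fun p : ℤ × ↥H => p.1 • p.2) ∘ f)
          = l.map (fun p : ℤ × G => p.1 • p.2) := by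
        refine List.map_congr_left ?_
        intro p hp
        simp [hfdef, Function.comp, dif_pos (hall p hp)]
      have h2 : H.subtype ((l.map f).map (fun p => p.1 • p.2)).sum = 0 := by
        rw [map_list_sum, List.map_map, List.map_map, heq, hsum]
      exact (AddSubgroup.subtype_injective H) (by rw [h2, map_zero])
    · simpa using hlen1
    · simpa using hlen2
  -- conclude
  have hH : sWle W (↥H) d ≤ ((n₀ + 1 - b : ℕ) : ℕ∞) := sWle_le_of_forall hPH
  have hQ : sWle W (G ⧸ H) d ≤ (b : ℕ∞) := sWle_le_of_forall hPb
  calc sWle W (↥H) d + sWle W (G ⧸ H) d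
      ≤ ((n₀ + 1 - b : ℕ) : ℕ∞) + (b : ℕ∞) := add_le_add hH hQ
    _ = ((n₀ + 1 : ℕ) : ℕ∞) := by
        rw [← Nat.cast_add]
        congr 1
        omega
    _ = (n₀ : ℕ∞) + 1 := by push_cast; ring
    _ ≤ sWle W G d + 1 := add_le_add_left hn₀le 1
end

section
/- Let G be a finite abelian group, H a subgroup of G, m ≥ 1, and let W ⊆ ℤ be a nonempty set of weights that is multiplicatively closed modulo exp(G). Then D_{W,m}(G) ≤ D_{W, D_{W,m}(H)}(G/H). -/
open scoped BigOperators

section Aux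

open Multiset in
/-- Monotonicity of summing a multiset of multisets over a sub-multiset. -/
lemma sum_map_le_aux {α γ : Type*} (Φ : α → Multiset γ) {t s : Multiset α} (h : t ≤ s) :
    (t.map Φ).sum ≤ (s.map Φ).sum := by
  obtain ⟨u, rfl⟩ := Multiset.le_iff_exists_add.mp h
  simp only [Multiset.map_add, Multiset.sum_add]
  exact self_le_add_right _ _

lemma coe_flat_aux {G : Type*} (L : List (List (ℤ × G))) :
    (↑(L.flatten.map Prod.snd) : Multiset G)
      = (L.map fun l => (↑(l.map Prod.snd) : Multiset G)).sum := by
  induction L with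
  | nil => rfl
  | cons l L ih =>
    simp only [List.flatten_cons, List.map_cons, List.map_append, List.sum_cons,
      ← Multiset.coe_add, ih]

lemma zsmul_eq_zero_of_exp_dvd {G : Type*} [AddCommGroup G] {c : ℤ}
    (h : (AddMonoid.exponent G : ℤ) ∣ c) (g : G) : c • g = 0 := by
  obtain ⟨k, rfl⟩ := h
  rw [mul_smul, natCast_zsmul, AddMonoid.exponent_nsmul_eq_zero]

/-- Lifting a weighted list along a map, keeping track of the remainder. -/
lemma lift_list_aux {α β : Type*} [DecidableEq α] [DecidableEq β] (f : α → β) :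
    ∀ (l : List (ℤ × β)) (S : Multiset α),
      (↑(l.map Prod.snd) : Multiset β) ≤ S.map f →
      ∃ l' : List (ℤ × α), l'.map (Prod.map id f) = l ∧
        (↑(l'.map Prod.snd) : Multiset α) ≤ S ∧
        (S - ↑(l'.map Prod.snd)).map f = S.map f - ↑(l.map Prod.snd) := by
  intro l
  induction l with
  | nil => intro S _; exact ⟨[], rfl, by simp, by simp⟩
  | cons p l ih =>
    intro S hle
    have hmem : p.2 ∈ S.map f := by
      refine Multiset.mem_of_le hle ?_
      simp
    obtain ⟨a, haS, hfa⟩ := Multiset.mem_map.mp hmem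
    have hSa : S = a ::ₘ S.erase a := (Multiset.cons_erase haS).symm
    have hmapS : S.map f = p.2 ::ₘ (S.erase a).map f := by
      conv_lhs => rw [hSa]
      rw [Multiset.map_cons, hfa]
    have hle' : (↑(l.map Prod.snd) : Multiset β) ≤ (S.erase a).map f := by
      have : p.2 ::ₘ ↑(l.map Prod.snd) ≤ p.2 ::ₘ (S.erase a).map f := by
        rw [← hmapS]
        simpa using hle
      exact (Multiset.cons_le_cons_iff p.2).mp this
    obtain ⟨l', h1, h2, h3⟩ := ih (S.erase a) hle'
    refine ⟨(p.1, a) :: l', ?_, ?_, ?_⟩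
    · simp [h1, Prod.map, hfa]
    · rw [List.map_cons]
      calc (↑((p.1, a).2 :: l'.map Prod.snd) : Multiset α)
          = a ::ₘ ↑(l'.map Prod.snd) := by rfl
        _ ≤ a ::ₘ S.erase a := Multiset.cons_le_cons a h2
        _ = S := Multiset.cons_erase haS
    · rw [List.map_cons, List.map_cons]
      have : S - ↑((p.1, a).2 :: l'.map Prod.snd) = S.erase a - ↑(l'.map Prod.snd) := by
        rw [show (↑((p.1, a).2 :: l'.map Prod.snd) : Multiset α)
            = (p.1, a).2 ::ₘ ↑(l'.map Prod.snd) from rfl, Multiset.sub_cons]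
      rw [this, h3, hmapS,
        show (↑(p.2 :: l.map Prod.snd) : Multiset β) = p.2 ::ₘ ↑(l.map Prod.snd) from rfl,
        Multiset.sub_cons, Multiset.erase_cons_head]

lemma lift_lists_aux {α β : Type*} [DecidableEq α] [DecidableEq β] (f : α → β) :
    ∀ (ls : List (List (ℤ × β))) (S : Multiset α),
      (↑(ls.flatten.map Prod.snd) : Multiset β) ≤ S.map f →
      ∃ ls' : List (List (ℤ × α)), ls'.map (List.map (Prod.map id f)) = ls ∧
        (↑(ls'.flatten.map Prod.snd) : Multiset α) ≤ S := by
  intro ls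
  induction ls with
  | nil => intro S _; exact ⟨[], rfl, by simp⟩
  | cons l ls ih =>
    intro S hle
    rw [List.flatten_cons, List.map_append, ← Multiset.coe_add] at hle
    have hl : (↑(l.map Prod.snd) : Multiset β) ≤ S.map f :=
      le_trans (self_le_add_right _ _) hle
    obtain ⟨l', h1, h2, h3⟩ := lift_list_aux f l S hl
    have hrest : (↑(ls.flatten.map Prod.snd) : Multiset β)
        ≤ (S - ↑(l'.map Prod.snd)).map f := by
      rw [h3]
      exact le_tsub_of_add_le_left hle
    obtain ⟨ls', g1, g2⟩ := ih (S - ↑(l'.map Prod.snd)) hrest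
    refine ⟨l' :: ls', by simp [h1, g1], ?_⟩
    rw [List.flatten_cons, List.map_append, ← Multiset.coe_add]
    rw [← le_tsub_iff_left h2] at *
    exact g2

/-- Every sufficiently long sequence over a finite group has `m` disjoint
`W`-weighted zero-subsums (crude bound). -/
lemma exists_bound_aux (W : Set ℤ) (hW : W.Nonempty) (G : Type*) [AddCommGroup G]
    [Finite G] (m : ℕ) :
    ∀ S : Multiset G, m * (Nat.card G * AddMonoid.exponent G) ≤ Multiset.card S →
      HasDisjointWZeroSubsums W S m := by
  classical
  obtain ⟨w0, hw0⟩ := hW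
  have := Fintype.ofFinite G
  set e := AddMonoid.exponent G with he
  have hepos : 0 < e := Nat.pos_of_ne_zero (AddMonoid.exponent_ne_zero_of_finite)
  set c := Nat.card G with hc
  have hcpos : 0 < c := Nat.card_pos
  induction m with
  | zero => intro S _; exact ⟨[], rfl, by simp, by simp⟩
  | succ m ih =>
    intro S hS
    -- pigeonhole: some g has multiplicity ≥ e
    have hce : c * e ≤ Multiset.card S := by
      calc c * e ≤ (m + 1) * (c * e) := Nat.le_mul_of_pos_left _ (Nat.succ_pos m)
        _ ≤ Multiset.card S := hS
    have hpig : ∃ g : G, e ≤ S.count g := by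
      by_contra hcon
      push_neg at hcon
      have hsum : Multiset.card S = ∑ g : G, S.count g := by
        rw [← Multiset.toFinset_sum_count_eq]
        exact Finset.sum_subset (Finset.subset_univ _) (fun x _ hx =>
          Multiset.count_eq_zero.mpr (fun h => hx (Multiset.mem_toFinset.mpr h)))
      have : Multiset.card S < c * e := by
        rw [hsum]
        calc ∑ g : G, S.count g < ∑ _g : G, e :=
              Finset.sum_lt_sum_of_nonempty Finset.univ_nonempty (fun i _ => hcon i)
          _ = c * e := by
              rw [Finset.sum_const, smul_eq_mul, Finset.card_univ, ← Nat.card_eq_fintype_card]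
      omega
    obtain ⟨g, hg⟩ := hpig
    have hrep : Multiset.replicate e g ≤ S := Multiset.le_count_iff_replicate_le.mp hg
    have hS' : m * (c * e) ≤ Multiset.card (S - Multiset.replicate e g) := by
      rw [Multiset.card_sub hrep, Multiset.card_replicate]
      have h1 : e ≤ c * e := Nat.le_mul_of_pos_left e hcpos
      have h2 : (m + 1) * (c * e) = m * (c * e) + c * e := by ring
      omega
    obtain ⟨ls, h1, h2, h3⟩ := ih (S - Multiset.replicate e g) hS'
    refine ⟨List.replicate e (w0, g) :: ls, by simp [h1], ?_, ?_⟩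
    · intro l hl
      rcases List.mem_cons.mp hl with rfl | hl
      · refine ⟨by simp [Ne, List.replicate_eq_nil_iff, hepos.ne'], ?_, ?_⟩
        · intro p hp
          rw [List.eq_of_mem_replicate hp]
          exact hw0
        · rw [List.map_replicate, List.sum_replicate]
          have : (w0, g).1 • (w0, g).2 = w0 • g := rfl
          rw [this, smul_comm, AddMonoid.exponent_nsmul_eq_zero, smul_zero]
      · exact h2 l hl
    · rw [List.flatten_cons, List.map_append, ← Multiset.coe_add]
      rw [← le_tsub_iff_left (by
        rw [List.map_replicate, Multiset.coe_replicate]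
        exact hrep)]
      rw [List.map_replicate, Multiset.coe_replicate]
      exact h3

lemma DW_spec_aux (W : Set ℤ) (hW : W.Nonempty) (G : Type*) [AddCommGroup G]
    [Finite G] (m : ℕ) :
    ∀ S : Multiset G, DW W G m ≤ Multiset.card S → HasDisjointWZeroSubsums W S m :=
  Nat.sInf_mem (⟨m * (Nat.card G * AddMonoid.exponent G), exists_bound_aux W hW G m⟩ :
    Set.Nonempty {n : ℕ | ∀ S : Multiset G, n ≤ Multiset.card S →
      HasDisjointWZeroSubsums W S m})

end Aux

/-- if `W` is multiplicatively closed modulo `exp(G)` then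
`D_{W,m}(G) ≤ D_{W,D_{W,m}(H)}(G/H)`. -/
theorem stmt7 {G : Type*} [AddCommGroup G] [Fintype G] (W : Set ℤ) (hW : W.Nonempty)
    (H : AddSubgroup G) (m : ℕ) (hm : 1 ≤ m)
    (hmul : MulClosedMod W (AddMonoid.exponent G)) :
    DW W G m ≤ DW W (G ⧸ H) (DW W (↥H) m) := by
  classical
  obtain ⟨w0, hw0⟩ := hW
  set σ : List (ℤ × G) → G := fun l => (l.map fun p => p.1 • p.2).sum with hσ
  have hu : ∀ v w : ℤ, v ∈ W → w ∈ W → ∃ x ∈ W, ∀ g : G, x • g = (v * w) • g := by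
    intro v w hv hw
    obtain ⟨x, hxW, hdvd⟩ := hmul v hv w hw
    refine ⟨x, hxW, fun g => ?_⟩
    have h0 := zsmul_eq_zero_of_exp_dvd (G := G) hdvd g
    rw [sub_smul, sub_eq_zero] at h0
    exact h0.symm
  choose! u huW husmul using hu
  apply Nat.sInf_le
  intro S hS
  set f : G →+ G ⧸ H := QuotientAddGroup.mk' H with hf
  have hcard : DW W (G ⧸ H) (DW W (↥H) m) ≤ Multiset.card (S.map ⇑f) := by
    rwa [Multiset.card_map]
  obtain ⟨ls, hlen, hprops, hle⟩ :=
    DW_spec_aux W ⟨w0, hw0⟩ (G ⧸ H) (DW W (↥H) m) (S.map ⇑f) hcard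
  obtain ⟨ls', hmap, hle'⟩ := lift_lists_aux (⇑f) ls S hle
  -- properties of the lifted lists
  have hls' : ∀ l ∈ ls', l ≠ [] ∧ (∀ p ∈ l, p.1 ∈ W) ∧ σ l ∈ H := by
    intro l hl
    have hmem : l.map (Prod.map id ⇑f) ∈ ls := by
      rw [← hmap]; exact List.mem_map_of_mem hl
    obtain ⟨h1, h2, h3⟩ := hprops _ hmem
    refine ⟨fun hnil => h1 (by simp [hnil]), fun p hp => ?_, ?_⟩
    · simpa using h2 _ (List.mem_map_of_mem (f := Prod.map id ⇑f) hp)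
    · have hsum : f (σ l) = 0 := by
        rw [hσ]
        simp only
        rw [map_list_sum, List.map_map]
        rw [List.map_map] at h3
        convert h3 using 2
        case e'_4 =>
          refine List.map_congr_left (fun p _ => ?_)
          simp [Prod.map]
        rfl
        rfl
      rwa [hf, QuotientAddGroup.mk'_apply, QuotientAddGroup.eq_zero_iff] at hsum
  set F : List (ℤ × G) → ↥H := fun l => if h : σ l ∈ H then (⟨σ l, h⟩ : ↥H) else 0 with hF
  have hFval : ∀ l ∈ ls', ((F l : ↥H) : G) = σ l := by
    intro l hl
    rw [hF]
    simp only
    rw [dif_pos (hls' l hl).2.2]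
  have hcard2 : DW W (↥H) m ≤ Multiset.card ((↑ls' : Multiset (List (ℤ × G))).map F) := by
    rw [Multiset.card_map, Multiset.coe_card]
    have hl : ls'.length = ls.length := by rw [← hmap, List.length_map]
    rw [hl, hlen]
  obtain ⟨ms, hmlen, hmprops, hmle⟩ := DW_spec_aux W ⟨w0, hw0⟩ (↥H) m _ hcard2
  obtain ⟨ms', hmap2, hle2⟩ := lift_lists_aux F ms (↑ls') hmle
  have hq2 : ∀ q ∈ ms'.flatten, q.2 ∈ ls' := by
    intro q hq
    have hm : q.2 ∈ (↑(ms'.flatten.map Prod.snd) : Multiset (List (ℤ × G))) := by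
      simp only [Multiset.mem_coe, List.mem_map]
      exact ⟨q, hq, rfl⟩
    simpa using Multiset.mem_of_le hle2 hm
  have hblocks : ∀ b ∈ ms', b ≠ [] ∧ (∀ q ∈ b, q.1 ∈ W) ∧
      (b.map fun q => q.1 • F q.2).sum = (0 : ↥H) := by
    intro b hb
    have hmem : b.map (Prod.map id F) ∈ ms := by
      rw [← hmap2]; exact List.mem_map_of_mem hb
    obtain ⟨h1, h2, h3⟩ := hmprops _ hmem
    refine ⟨fun hnil => h1 (by simp [hnil]), fun q hq => ?_, ?_⟩
    · simpa using h2 _ (List.mem_map_of_mem hq)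
    · rw [List.map_map] at h3
      convert h3 using 2
      case e'_4 =>
        refine List.map_congr_left (fun q _ => ?_)
        simp [Prod.map]
      rfl
      rfl
  set comb : List (ℤ × List (ℤ × G)) → List (ℤ × G) :=
    fun b => (b.map fun q => q.2.map fun p => (u q.1 p.1, p.2)).flatten with hcomb
  refine ⟨ms'.map comb, ?_, ?_, ?_⟩
  · rw [List.length_map]
    rw [← hmap2, List.length_map] at hmlen
    exact hmlen
  · rintro c hc
    obtain ⟨b, hb, rfl⟩ := List.mem_map.mp hc
    obtain ⟨hb1, hb2, hb3⟩ := hblocks b hb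
    refine ⟨?_, ?_, ?_⟩
    · obtain ⟨q, hq⟩ := List.exists_mem_of_ne_nil b hb1
      have hq2' : q.2 ∈ ls' := hq2 q (List.mem_flatten.mpr ⟨b, hb, hq⟩)
      intro hnil
      rw [hcomb] at hnil
      simp only at hnil
      rw [List.flatten_eq_nil_iff] at hnil
      have := hnil (q.2.map fun p => (u q.1 p.1, p.2)) (List.mem_map_of_mem hq)
      rw [List.map_eq_nil_iff] at this
      exact (hls' q.2 hq2').1 this
    · intro p hp
      rw [hcomb] at hp
      simp only at hp
      obtain ⟨x, hx, hpx⟩ := List.mem_flatten.mp hp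
      obtain ⟨q, hq, rfl⟩ := List.mem_map.mp hx
      obtain ⟨p0, hp0, rfl⟩ := List.mem_map.mp hpx
      have hq2' : q.2 ∈ ls' := hq2 q (List.mem_flatten.mpr ⟨b, hb, hq⟩)
      exact huW q.1 p0.1 (hb2 q hq) ((hls' q.2 hq2').2.1 p0 hp0)
    · have key : ((comb b).map fun p => p.1 • p.2).sum
          = (b.map fun q => q.1 • σ q.2).sum := by
        rw [hcomb]
        simp only
        rw [List.map_flatten, List.map_map, List.sum_flatten, List.map_map]
        congr 1
        refine List.map_congr_left (fun q hq => ?_)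
        have hq2' : q.2 ∈ ls' := hq2 q (List.mem_flatten.mpr ⟨b, hb, hq⟩)
        simp only [Function.comp, List.map_map]
        have heq : (q.2.map ((fun p => p.1 • p.2) ∘ fun p => (u q.1 p.1, p.2)))
            = (q.2.map (fun p => p.1 • p.2)).map (fun x => q.1 • x) := by
          rw [List.map_map]
          refine List.map_congr_left (fun p hp => ?_)
          simp only [Function.comp]
          rw [husmul q.1 p.1 (hb2 q hq) ((hls' q.2 hq2').2.1 p hp), mul_smul]
        rw [heq, ← List.smul_sum]
      rw [key]
      have key2 : (b.map fun q => q.1 • σ q.2) = (b.map fun q => q.1 • F q.2).map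
          ⇑(AddSubgroup.subtype H) := by
        rw [List.map_map]
        refine List.map_congr_left (fun q hq => ?_)
        have hq2' : q.2 ∈ ls' := hq2 q (List.mem_flatten.mpr ⟨b, hb, hq⟩)
        simp only [Function.comp]
        rw [map_zsmul, ← hFval q.2 hq2']
        rfl
      rw [key2, ← map_list_sum (AddSubgroup.subtype H), hb3, map_zero]
  · set Φ : List (ℤ × G) → Multiset G :=
      fun l => (↑(l.map Prod.snd) : Multiset G) with hΦ
    have e1 : (↑((ms'.map comb).flatten.map Prod.snd) : Multiset G)
        = ((ms'.map fun b => ((b.map fun q => Φ q.2).sum : Multiset G)).sum : Multiset G) := by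
      rw [coe_flat_aux, List.map_map]
      congr 1
      refine List.map_congr_left (fun b _ => ?_)
      show Φ (comb b) = _
      rw [hΦ, hcomb]
      simp only
      rw [coe_flat_aux, List.map_map]
      congr 1
      refine List.map_congr_left (fun q _ => ?_)
      simp only [Function.comp, List.map_map]
      rfl
    have e2 : (((↑(ms'.flatten.map Prod.snd) : Multiset (List (ℤ × G))).map Φ).sum : Multiset G)
        = ((ms'.map fun b => ((b.map fun q => Φ q.2).sum : Multiset G)).sum : Multiset G) := by
      rw [Multiset.map_coe, Multiset.sum_coe, List.map_map, List.map_flatten,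
        List.sum_flatten, List.map_map]
      rfl
    have e3 : (((↑ls' : Multiset (List (ℤ × G))).map Φ).sum : Multiset G)
        = (↑(ls'.flatten.map Prod.snd) : Multiset G) := by
      rw [Multiset.map_coe, Multiset.sum_coe, coe_flat_aux]
    calc (↑((ms'.map comb).flatten.map Prod.snd) : Multiset G)
        = ((↑(ms'.flatten.map Prod.snd) : Multiset (List (ℤ × G))).map Φ).sum := by
          rw [e1, ← e2]
      _ ≤ ((↑ls' : Multiset (List (ℤ × G))).map Φ).sum := sum_map_le_aux Φ hle2
      _ = ↑(ls'.flatten.map Prod.snd) := e3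
      _ ≤ S := hle'
end

section
/- Let G be a finite abelian group, H a subgroup of G, and let W ⊆ ℤ be a nonempty set of weights that is multiplicatively closed modulo exp(G). Let L₁, L₂ ⊆ ℕ be nonempty subsets with L₂ finite, and set L := ∪_{l∈L₁} l·L₂, where l·L₂ denotes the l-fold sumset of L₂. Then s_{W,L}(G) ≤ (max L₂)·(s_{W,L₁}(H) − 1) + s_{W,L₂}(G/H) (with the convention that the right-hand side is ∞ if s_{W,L₁}(H) or s_{W,L₂}(G/H) is ∞). -/
open scoped BigOperators

-- auxiliary lemmas


lemma lift_list {α β : Type*} (f : α → β) :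
    ∀ (l' : List (ℤ × β)) (S : Multiset α),
      (↑(l'.map Prod.snd) : Multiset β) ≤ S.map f →
      ∃ l : List (ℤ × α), l.map (fun p => (p.1, f p.2)) = l' ∧
        (↑(l.map Prod.snd) : Multiset α) ≤ S := by
  classical
  intro l'
  induction l' with
  | nil => intro S _; exact ⟨[], rfl, by simp⟩
  | cons p rest ih =>
    intro S hle
    have hmem : p.2 ∈ S.map f := by
      refine Multiset.mem_of_le hle ?_
      simp
    obtain ⟨a, haS, hfa⟩ := Multiset.mem_map.mp hmem
    have hS : S = a ::ₘ S.erase a := (Multiset.cons_erase haS).symm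
    have hrest : (↑(rest.map Prod.snd) : Multiset β) ≤ (S.erase a).map f := by
      have : (p.2 ::ₘ ↑(rest.map Prod.snd) : Multiset β) ≤ p.2 ::ₘ (S.erase a).map f := by
        have h1 : ((p :: rest).map Prod.snd : List β) = p.2 :: rest.map Prod.snd := rfl
        rw [h1] at hle
        calc (p.2 ::ₘ ↑(rest.map Prod.snd) : Multiset β) = ↑(p.2 :: rest.map Prod.snd) := by
              simp
          _ ≤ S.map f := hle
          _ = p.2 ::ₘ (S.erase a).map f := by rw [hS]; simp [hfa]
      exact (Multiset.cons_le_cons_iff p.2).mp this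
    obtain ⟨l, heq, hle'⟩ := ih (S.erase a) hrest
    refine ⟨(p.1, a) :: l, ?_, ?_⟩
    · simp [heq, hfa]
    · calc (↑(((p.1, a) :: l).map Prod.snd) : Multiset α) = a ::ₘ ↑(l.map Prod.snd) := by simp
        _ ≤ a ::ₘ S.erase a := Multiset.cons_le_cons a hle'
        _ = S := Multiset.cons_erase haS

lemma sublist_flatten {α : Type*} {l₁ l₂ : List (List α)} (h : List.Sublist l₁ l₂) :
    List.Sublist l₁.flatten l₂.flatten := by
  induction h with
  | slnil => exact List.Sublist.refl _
  | cons a _ ih => exact ih.trans (List.sublist_append_right _ _)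
  | cons_cons a _ ih => exact ih.append_left a

lemma flatten_le {α : Type*} {ll ll' : List (List α)}
    (h : (↑ll : Multiset (List α)) ≤ ↑ll') :
    (↑ll.flatten : Multiset α) ≤ ↑ll'.flatten := by
  rw [Multiset.coe_le] at h ⊢
  obtain ⟨mid, hperm, hsub⟩ := h
  exact ⟨mid.flatten, hperm.flatten, sublist_flatten hsub⟩

lemma zsmul_exp_dvd {G : Type*} [AddCommGroup G] {m : ℤ}
    (h : (AddMonoid.exponent G : ℤ) ∣ m) (g : G) : m • g = 0 := by
  obtain ⟨c, rfl⟩ := h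
  rw [mul_smul, natCast_zsmul]
  simp [AddMonoid.exponent_nsmul_eq_zero]


lemma extract_blocks {G : Type*} [AddCommGroup G] (W : Set ℤ) (H : AddSubgroup G)
    (L₂ : Finset ℕ) (n₂ d : ℕ) (hd : ∀ t ∈ L₂, t ≤ d)
    (h₂ : ∀ S : Multiset (G ⧸ H), n₂ ≤ Multiset.card S → HasWZeroSubsumLen W S (↑L₂ : Set ℕ)) :
    ∀ (k : ℕ) (S : Multiset G), d * k + n₂ ≤ Multiset.card S + d →
    ∃ ls : List (List (ℤ × G)), ls.length = k ∧
      (∀ l ∈ ls, (∀ p ∈ l, p.1 ∈ W) ∧ l.length ∈ L₂ ∧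
        (l.map fun p => p.1 • p.2).sum ∈ H) ∧
      (↑(ls.flatten.map Prod.snd) : Multiset G) ≤ S := by
  classical
  intro k
  induction k with
  | zero => intro S _; exact ⟨[], rfl, by simp, by simp⟩
  | succ k ih =>
    intro S hcard
    have hmulsucc : d * (k + 1) = d * k + d := by ring
    have hcard' : d * k + n₂ ≤ Multiset.card S := by omega
    have hn₂ : n₂ ≤ Multiset.card (S.map (QuotientAddGroup.mk : G → G ⧸ H)) := by
      rw [Multiset.card_map]; omega
    obtain ⟨l', ⟨hne', hW', hle', hsum'⟩, hlen'⟩ := h₂ _ hn₂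
    obtain ⟨l, heq, hle⟩ := lift_list (QuotientAddGroup.mk : G → G ⧸ H) l' S hle'
    have hlenl : l.length = l'.length := by rw [← heq, List.length_map]
    have hlenL₂ : l.length ∈ L₂ := by rw [hlenl]; exact hlen'
    have hld : l.length ≤ d := hd _ hlenL₂
    have hWl : ∀ p ∈ l, p.1 ∈ W := by
      intro p hp
      have : (p.1, (QuotientAddGroup.mk p.2 : G ⧸ H)) ∈ l' := by
        rw [← heq]; exact List.mem_map_of_mem hp
      exact hW' _ this
    have hsuml : (l.map fun p => p.1 • p.2).sum ∈ H := by
      rw [← QuotientAddGroup.eq_zero_iff]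
      have : ((QuotientAddGroup.mk' H) (l.map fun p => p.1 • p.2).sum) = 0 := by
        rw [map_list_sum, List.map_map]
        have : ((QuotientAddGroup.mk' H) ∘ fun p : ℤ × G => p.1 • p.2) =
            (fun p : ℤ × G⧸H => p.1 • p.2) ∘ (fun p : ℤ × G => (p.1, QuotientAddGroup.mk p.2)) := by
          funext p; simp
        rw [this, ← List.map_map, heq, hsum']
      exact this
    have hcardsub : Multiset.card (S - (↑(l.map Prod.snd) : Multiset G)) = Multiset.card S - l.length := by
      rw [Multiset.card_sub hle, Multiset.coe_card, List.length_map]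
    have hcard'' : d * k + n₂ ≤ Multiset.card (S - (↑(l.map Prod.snd) : Multiset G)) + d := by
      have hls : l.length ≤ Multiset.card S := by
        have := Multiset.card_le_card hle
        simpa using this
      omega
    obtain ⟨ls, hlslen, hlsprop, hlsle⟩ := ih _ hcard''
    refine ⟨l :: ls, by simp [hlslen], ?_, ?_⟩
    · intro l₀ hl₀
      rcases List.mem_cons.mp hl₀ with rfl | h
      · exact ⟨hWl, hlenL₂, hsuml⟩
      · exact hlsprop _ h
    · have : (↑((l :: ls).flatten.map Prod.snd) : Multiset G)
          = ↑(l.map Prod.snd) + ↑(ls.flatten.map Prod.snd) := by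
        simp [List.flatten_cons]
      rw [this]
      calc (↑(l.map Prod.snd) : Multiset G) + ↑(ls.flatten.map Prod.snd)
          ≤ ↑(l.map Prod.snd) + (S - (↑(l.map Prod.snd) : Multiset G)) := add_le_add (le_refl _) hlsle
        _ = S := add_tsub_cancel_of_le hle

lemma main_lemma {G : Type*} [AddCommGroup G] (W : Set ℤ)
    (H : AddSubgroup G) (hmul : MulClosedMod W (AddMonoid.exponent G))
    (L₁ : Set ℕ) (hL₁pos : 0 ∉ L₁)
    (L₂ : Finset ℕ) (hL₂ : L₂.Nonempty) (hL₂pos : 0 ∉ L₂) (n₁ n₂ : ℕ)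
    (h₁ : ∀ S : Multiset ↥H, n₁ ≤ Multiset.card S → HasWZeroSubsumLen W S L₁)
    (h₂ : ∀ S : Multiset (G ⧸ H), n₂ ≤ Multiset.card S → HasWZeroSubsumLen W S (↑L₂ : Set ℕ)) :
    ∀ S : Multiset G, L₂.max' hL₂ * (n₁ - 1) + n₂ ≤ Multiset.card S →
      HasWZeroSubsumLen W S
        {t : ℕ | ∃ l ∈ L₁, ∃ f : Fin l → ℕ, (∀ i, f i ∈ L₂) ∧ ∑ i, f i = t} := by
  classical
  intro S hcard
  set d := L₂.max' hL₂ with hdset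
  have hd : ∀ t ∈ L₂, t ≤ d := fun t ht => Finset.le_max' _ t ht
  -- extract n₁ blocks
  have hcard' : d * n₁ + n₂ ≤ Multiset.card S + d := by
    have h1 : d * n₁ ≤ d * (n₁ - 1) + d := by
      have := Nat.mul_le_mul_left d (show n₁ ≤ n₁ - 1 + 1 by omega)
      simpa [Nat.mul_succ] using this
    omega
  obtain ⟨ls, hlslen, hlsprop, hlsle⟩ := extract_blocks W H L₂ n₂ d hd h₂ n₁ S hcard'
  -- block sums as elements of H
  set F : List (ℤ × G) → ↥H := fun b =>
    if h : (b.map fun p => p.1 • p.2).sum ∈ H then ⟨_, h⟩ else 0 with hF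
  have hFcoe : ∀ b ∈ ls, ((F b : ↥H) : G) = (b.map fun p => p.1 • p.2).sum := by
    intro b hb
    rw [hF]
    simp only [dif_pos (hlsprop b hb).2.2]
  have hcardH : n₁ ≤ Multiset.card (↑(ls.map F) : Multiset ↥H) := by
    simp [hlslen]
  obtain ⟨l₁, ⟨hne₁, hW₁, hle₁, hsum₁⟩, hlen₁⟩ := h₁ _ hcardH
  have hle₁' : (↑(l₁.map Prod.snd) : Multiset ↥H) ≤ (↑ls : Multiset (List (ℤ × G))).map F := by
    rwa [Multiset.map_coe]
  obtain ⟨l₂, heq₂, hle₂⟩ := lift_list F l₁ (↑ls : Multiset (List (ℤ × G))) hle₁'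
  have hmem₂ : ∀ p ∈ l₂, p.2 ∈ ls := by
    intro p hp
    have : p.2 ∈ (↑(l₂.map Prod.snd) : Multiset (List (ℤ × G))) := by
      rw [Multiset.mem_coe]; exact List.mem_map_of_mem hp
    exact Multiset.mem_coe.mp (Multiset.mem_of_le hle₂ this)
  have hW₂ : ∀ p ∈ l₂, p.1 ∈ W := by
    intro p hp
    have : (p.1, F p.2) ∈ l₁ := by rw [← heq₂]; exact List.mem_map_of_mem hp
    exact hW₁ _ this
  -- weight adjustment
  choose! u hu1 hu2 using hmul
  -- final list
  set final : List (ℤ × G) :=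
    (l₂.map fun p => p.2.map fun q => (u p.1 q.1, q.2)).flatten with hfinal
  have hlenblocks : ∀ p ∈ l₂, p.2.length ∈ L₂ := fun p hp => (hlsprop _ (hmem₂ p hp)).2.1
  have hlenfinal : final.length = (l₂.map fun p => p.2.length).sum := by
    rw [hfinal, List.length_flatten, List.map_map]
    congr 1
    apply List.map_congr_left
    intro p _
    simp
  have hlen₂ : l₂.length = l₁.length := by rw [← heq₂, List.length_map]
  refine ⟨final, ⟨?_, ?_, ?_, ?_⟩, ?_⟩
  · -- nonempty
    intro hnil
    have hl₂ne : l₂ ≠ [] := by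
      intro h; apply hne₁; rw [← heq₂, h]; rfl
    obtain ⟨p, hp⟩ := List.exists_mem_of_ne_nil _ hl₂ne
    have hp2 : 0 < p.2.length := Nat.pos_of_ne_zero (fun h => hL₂pos (h ▸ hlenblocks p hp))
    have hplen : p.2.length ≤ final.length := by
      rw [hlenfinal]
      exact List.single_le_sum (fun x _ => Nat.zero_le x) _ (List.mem_map_of_mem hp)
    rw [hnil] at hplen
    simp only [List.length_nil, Nat.le_zero] at hplen
    omega
  · -- weights in W
    intro q hq
    rw [hfinal, List.mem_flatten] at hq
    obtain ⟨b, hb, hqb⟩ := hq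
    rw [List.mem_map] at hb
    obtain ⟨p, hp, rfl⟩ := hb
    rw [List.mem_map] at hqb
    obtain ⟨q', hq', rfl⟩ := hqb
    exact hu1 p.1 (hW₂ p hp) q'.1 ((hlsprop _ (hmem₂ p hp)).1 q' hq')
  · -- submultiset
    have key : (↑(final.map Prod.snd) : Multiset G) ≤ ↑(ls.flatten.map Prod.snd) := by
      have h1 : final.map Prod.snd = (l₂.map fun p => p.2.map Prod.snd).flatten := by
        rw [hfinal, List.map_flatten, List.map_map]
        congr 1
        apply List.map_congr_left
        intro p _
        simp [List.map_map]
      have h2 : ls.flatten.map Prod.snd = (ls.map fun b => b.map Prod.snd).flatten := by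
        rw [List.map_flatten]
      rw [h1, h2]
      apply flatten_le
      have h3 : l₂.map (fun p => p.2.map Prod.snd)
          = (l₂.map Prod.snd).map fun b => b.map Prod.snd := by
        rw [List.map_map]; rfl
      rw [h3, ← Multiset.map_coe, ← Multiset.map_coe]
      exact Multiset.map_le_map hle₂
    exact key.trans hlsle
  · -- sum is zero
    have hblock : ∀ p ∈ l₂,
        ((p.2.map fun q => (u p.1 q.1, q.2)).map fun q => q.1 • q.2).sum
          = p.1 • ((F p.2 : ↥H) : G) := by
      intro p hp
      rw [hFcoe _ (hmem₂ p hp)]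
      rw [List.map_map]
      have : ((fun q : ℤ × G => q.1 • q.2) ∘ fun q : ℤ × G => (u p.1 q.1, q.2))
          = fun q : ℤ × G => u p.1 q.1 • q.2 := rfl
      rw [this]
      have heach : ∀ q ∈ p.2, u p.1 q.1 • q.2 = p.1 • (q.1 • q.2) := by
        intro q hq
        have hqW : q.1 ∈ W := (hlsprop _ (hmem₂ p hp)).1 q hq
        have hdvd := hu2 p.1 (hW₂ p hp) q.1 hqW
        have : (p.1 * q.1 - u p.1 q.1) • q.2 = 0 := zsmul_exp_dvd hdvd q.2
        rw [sub_smul, sub_eq_zero] at this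
        rw [← this, mul_smul]
      rw [List.map_congr_left heach, List.smul_sum, List.map_map]
      rfl
    calc (final.map fun q => q.1 • q.2).sum
        = ((l₂.map fun p => ((p.2.map fun q => (u p.1 q.1, q.2)).map fun q => q.1 • q.2)).flatten).sum := by
          rw [hfinal, List.map_flatten, List.map_map]; rfl
      _ = ((l₂.map fun p => ((p.2.map fun q => (u p.1 q.1, q.2)).map fun q => q.1 • q.2)).map List.sum).sum := by
          rw [List.sum_flatten]
      _ = (l₂.map fun p => p.1 • ((F p.2 : ↥H) : G)).sum := by
          rw [List.map_map]
          congr 1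
          apply List.map_congr_left
          intro p hp
          exact hblock p hp
      _ = ((l₂.map fun p => p.1 • (F p.2)).sum : ↥H) := by
          rw [AddSubmonoidClass.coe_list_sum, List.map_map]
          congr 1
      _ = 0 := by
          have : l₂.map (fun p => p.1 • F p.2) = l₁.map fun p => p.1 • p.2 := by
            rw [← heq₂, List.map_map]; rfl
          rw [this, hsum₁]
          rfl
  · -- length in L
    refine ⟨l₂.length, by rw [hlen₂]; exact hlen₁, fun i => (l₂.get i).2.length, ?_, ?_⟩
    · intro i
      exact hlenblocks _ (List.get_mem l₂ i)
    · rw [hlenfinal, ← List.ofFn_getElem_eq_map l₂ (fun p => p.2.length), List.sum_ofFn]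
      rfl


/-- for `W` multiplicatively closed modulo `exp(G)` and nonempty sets
of positive integers `L₁`, `L₂` with `L₂` finite, setting `L = ∪_{l ∈ L₁} l·L₂`
(the union of `l`-fold sumsets of `L₂`),
`s_{W,L}(G) ≤ (max L₂)(s_{W,L₁}(H) - 1) + s_{W,L₂}(G/H)` (in `ℕ∞`). -/
theorem stmt8 {G : Type*} [AddCommGroup G] [Fintype G] (W : Set ℤ) (hW : W.Nonempty)
    (H : AddSubgroup G) (hmul : MulClosedMod W (AddMonoid.exponent G))
    (L₁ : Set ℕ) (hL₁ : L₁.Nonempty) (hL₁pos : 0 ∉ L₁)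
    (L₂ : Finset ℕ) (hL₂ : L₂.Nonempty) (hL₂pos : 0 ∉ L₂) :
    sWL W G {t : ℕ | ∃ l ∈ L₁, ∃ f : Fin l → ℕ, (∀ i, f i ∈ L₂) ∧ ∑ i, f i = t} ≤
      ((L₂.max' hL₂ : ℕ) : ℕ∞) * (sWL W (↥H) L₁ - 1) + sWL W (G ⧸ H) (↑L₂ : Set ℕ) := by
  classical
  set d := L₂.max' hL₂ with hdset
  have hd0 : ((d : ℕ) : ℕ∞) ≠ 0 := by
    simp only [Nat.cast_ne_zero]
    intro h; exact hL₂pos (h ▸ L₂.max'_mem hL₂)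
  set T₁ : Set ℕ∞ := {N : ℕ∞ | ∃ n : ℕ, N = (n : ℕ∞) ∧
    ∀ S : Multiset ↥H, n ≤ Multiset.card S → HasWZeroSubsumLen W S L₁} with hT₁
  set T₂ : Set ℕ∞ := {N : ℕ∞ | ∃ n : ℕ, N = (n : ℕ∞) ∧
    ∀ S : Multiset (G ⧸ H), n ≤ Multiset.card S → HasWZeroSubsumLen W S (↑L₂ : Set ℕ)} with hT₂
  have hs₁ : sWL W (↥H) L₁ = sInf T₁ := rfl
  have hs₂ : sWL W (G ⧸ H) (↑L₂ : Set ℕ) = sInf T₂ := rfl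
  rcases T₁.eq_empty_or_nonempty with he₁ | hne₁
  · rw [hs₁, he₁, sInf_empty]
    have : (⊤ : ℕ∞) - 1 = ⊤ := by
      rw [← Nat.cast_one, ENat.top_sub_coe]
    rw [this, ENat.mul_top hd0, top_add]
    exact le_top
  rcases T₂.eq_empty_or_nonempty with he₂ | hne₂
  · rw [hs₂, he₂, sInf_empty, add_top]
    exact le_top
  obtain ⟨n₁, heq₁, hP₁⟩ := csInf_mem hne₁
  obtain ⟨n₂, heq₂, hP₂⟩ := csInf_mem hne₂
  rw [hs₁, hs₂, heq₁, heq₂]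
  have hmain := main_lemma W H hmul L₁ hL₁pos L₂ hL₂ hL₂pos n₁ n₂ hP₁ hP₂
  have hle : sWL W G {t : ℕ | ∃ l ∈ L₁, ∃ f : Fin l → ℕ, (∀ i, f i ∈ L₂) ∧ ∑ i, f i = t}
      ≤ ((d * (n₁ - 1) + n₂ : ℕ) : ℕ∞) := by
    apply sInf_le
    exact ⟨d * (n₁ - 1) + n₂, rfl, hmain⟩
  refine hle.trans (le_of_eq ?_)
  rw [Nat.cast_add, Nat.cast_mul, ENat.coe_sub, Nat.cast_one]
end

section
/- Let G be a finite abelian group with |G| > 1, let m ∈ ℕ, and let W ⊆ ℤ be a nonempty set of weights that is multiplicatively closed modulo exp(G) and non-trivial modulo exp(G). Then D_{W,m+1}(G) ≥ D_{W,m}(G) + 2. -/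
open scoped BigOperators

section AuxStmt10

variable {G : Type*} [AddCommGroup G]

/-- Weighted sum of a list of (weight, element) pairs. -/
def WSaux (l : List (ℤ × G)) : G := (l.map fun p => p.1 • p.2).sum

lemma WSaux_cons (p : ℤ × G) (l : List (ℤ × G)) : WSaux (p :: l) = p.1 • p.2 + WSaux l := by
  simp [WSaux]

lemma WSaux_append (l₁ l₂ : List (ℤ × G)) : WSaux (l₁ ++ l₂) = WSaux l₁ + WSaux l₂ := by
  simp [WSaux]

lemma WSaux_perm {l₁ l₂ : List (ℤ × G)} (h : l₁.Perm l₂) : WSaux l₁ = WSaux l₂ :=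
  (h.map _).sum_eq

lemma exp_zsmul_aux (x : G) : (AddMonoid.exponent G : ℤ) • x = 0 := by
  rw [natCast_zsmul]; exact AddMonoid.exponent_nsmul_eq_zero x

lemma zsmul_congr_aux {a b : ℤ} (h : (AddMonoid.exponent G : ℤ) ∣ a - b) (x : G) :
    a • x = b • x := by
  obtain ⟨k, hk⟩ := h
  have ha : a = b + (AddMonoid.exponent G : ℤ) * k := by linarith
  rw [ha, add_zsmul, mul_zsmul, exp_zsmul_aux, add_zero]

lemma redW_aux {W : Set ℤ} (hmul : MulClosedMod W (AddMonoid.exponent G)) {v w : ℤ}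
    (hv : v ∈ W) (hw : w ∈ W) : ∃ c ∈ W, ∀ x : G, c • x = (v * w) • x := by
  obtain ⟨u, hu, hdvd⟩ := hmul v hv w hw
  refine ⟨u, hu, fun x => zsmul_congr_aux ?_ x⟩
  have : u - v * w = -(v * w - u) := by ring
  rw [this]
  exact dvd_neg.mpr hdvd

lemma scaleList_aux {W : Set ℤ} (hmul : MulClosedMod W (AddMonoid.exponent G))
    {c : ℤ} (hc : c ∈ W) :
    ∀ (A : List (ℤ × G)), (∀ p ∈ A, p.1 ∈ W) →
      ∃ A' : List (ℤ × G), (∀ p ∈ A', p.1 ∈ W) ∧ A'.map Prod.snd = A.map Prod.snd ∧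
        WSaux A' = c • WSaux A := by
  intro A
  induction A with
  | nil => exact fun _ => ⟨[], by simp, by simp, by simp [WSaux]⟩
  | cons p A ih =>
    intro hA
    obtain ⟨A', hW', hmap', hsum'⟩ := ih (fun q hq => hA q (List.mem_cons_of_mem _ hq))
    obtain ⟨c', hc', hact⟩ := redW_aux hmul hc (hA p List.mem_cons_self)
    refine ⟨(c', p.2) :: A', ?_, by simp [hmap'], ?_⟩
    · intro q hq
      rcases List.mem_cons.1 hq with rfl | hq
      · exact hc'
      · exact hW' _ hq
    · rw [WSaux_cons, WSaux_cons, smul_add, hsum', hact, mul_zsmul]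

lemma perm_flatten_aux {α : Type*} {l₁ l₂ : List (List α)} (h : l₁.Perm l₂) :
    l₁.flatten.Perm l₂.flatten := by
  induction h with
  | nil => exact List.Perm.refl _
  | cons x _ ih => simpa [List.flatten_cons] using ih.append_left x
  | swap x y l =>
    simp only [List.flatten_cons, ← List.append_assoc]
    exact List.perm_append_comm.append_right _
  | trans _ _ ih₁ ih₂ => exact ih₁.trans ih₂

lemma exists_perm_cons_aux {α : Type*} {la : α} {ls : List α} (h : la ∈ ls) :
    ∃ rest, ls.Perm (la :: rest) := by
  classical
  exact ⟨ls.erase la, List.perm_cons_erase h⟩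

lemma flatten_coe_aux {β γ : Type*} (f : β → γ) {l₁ l₂ : List (List β)} (h : l₁.Perm l₂) :
    (↑(l₁.flatten.map f) : Multiset γ) = ↑(l₂.flatten.map f) :=
  Multiset.coe_eq_coe.mpr ((perm_flatten_aux h).map f)

/-- The merge lemma: two zero-subsums, one containing `g` and the other containing
`-(u • g)`, can be merged into a single zero-subsum avoiding both occurrences. -/
lemma merge_aux {W : Set ℤ} (hmul : MulClosedMod W (AddMonoid.exponent G))
    {g : G} (hg : ∀ w ∈ W, w • g ≠ 0) {u : ℤ} (hu : u ∈ W)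
    {l₁ l₂ : List (ℤ × G)} (h₁W : ∀ p ∈ l₁, p.1 ∈ W) (h₂W : ∀ p ∈ l₂, p.1 ∈ W)
    (h₁0 : WSaux l₁ = 0) (h₂0 : WSaux l₂ = 0)
    {p q : ℤ × G} (hp : p ∈ l₁) (hq : q ∈ l₂) (hpg : p.2 = g) (hqh : q.2 = -(u • g)) :
    ∃ (L : List (ℤ × G)) (X Y : Multiset G), L ≠ [] ∧ (∀ r ∈ L, r.1 ∈ W) ∧ WSaux L = 0 ∧
      (↑(l₁.map Prod.snd) : Multiset G) = g ::ₘ X ∧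
      (↑(l₂.map Prod.snd) : Multiset G) = (-(u • g)) ::ₘ Y ∧
      (↑(L.map Prod.snd) : Multiset G) = X + Y := by
  obtain ⟨A, hpermA⟩ := exists_perm_cons_aux hp
  obtain ⟨B, hpermB⟩ := exists_perm_cons_aux hq
  have hAW : ∀ r ∈ A, r.1 ∈ W := fun r hr => h₁W r (hpermA.symm.subset (List.mem_cons_of_mem _ hr))
  have hBW : ∀ r ∈ B, r.1 ∈ W := fun r hr => h₂W r (hpermB.symm.subset (List.mem_cons_of_mem _ hr))
  have hw : p.1 ∈ W := h₁W p hp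
  have hv : q.1 ∈ W := h₂W q hq
  have hA0 : WSaux A = -(p.1 • g) := by
    have h := h₁0
    rw [WSaux_perm hpermA, WSaux_cons, hpg] at h
    exact eq_neg_of_add_eq_zero_right h
  have hB0 : WSaux B = (q.1 * u) • g := by
    have h := h₂0
    rw [WSaux_perm hpermB, WSaux_cons, hqh, smul_neg, ← mul_zsmul] at h
    have := eq_neg_of_add_eq_zero_right h
    rwa [neg_neg] at this
  obtain ⟨c, hcW, hc⟩ := redW_aux hmul hv hu
  obtain ⟨A', hA'W, hA'map, hA'sum⟩ := scaleList_aux hmul hcW A hAW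
  obtain ⟨B', hB'W, hB'map, hB'sum⟩ := scaleList_aux hmul hw B hBW
  have hAne : A ≠ [] := by
    intro hnil
    rw [hnil] at hA0
    have : p.1 • g = 0 := by
      have : (0 : G) = -(p.1 • g) := hA0
      simpa [eq_comm, neg_eq_zero] using this
    exact hg p.1 hw this
  refine ⟨A' ++ B', ↑(A.map Prod.snd), ↑(B.map Prod.snd), ?_, ?_, ?_, ?_, ?_, ?_⟩
  · intro hnil
    apply hAne
    have h1 : A'.map Prod.snd = [] := by
      rw [List.append_eq_nil_iff] at hnil
      rw [hnil.1]; rfl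
    rw [hA'map] at h1
    exact List.map_eq_nil_iff.1 h1
  · intro r hr
    rcases List.mem_append.1 hr with hr | hr
    · exact hA'W r hr
    · exact hB'W r hr
  · rw [WSaux_append, hA'sum, hB'sum, hA0, hB0, hc, smul_neg, ← mul_zsmul, ← mul_zsmul]
    rw [mul_comm (q.1 * u) p.1, neg_add_cancel]
  · have h1 : (↑(l₁.map Prod.snd) : Multiset G) = ↑((p :: A).map Prod.snd) :=
      Multiset.coe_eq_coe.mpr (hpermA.map _)
    rw [h1, List.map_cons, ← Multiset.cons_coe, hpg]
  · have h1 : (↑(l₂.map Prod.snd) : Multiset G) = ↑((q :: B).map Prod.snd) :=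
      Multiset.coe_eq_coe.mpr (hpermB.map _)
    rw [h1, List.map_cons, ← Multiset.cons_coe, hqh]
  · rw [List.map_append, ← Multiset.coe_add, hA'map, hB'map]

/-- Core lemma: appending `g` and `-(u•g)` to a sequence without `m` disjoint
zero-subsums yields a sequence without `m+1` disjoint zero-subsums. -/
lemma crux_aux {W : Set ℤ} (hmul : MulClosedMod W (AddMonoid.exponent G))
    {g : G} (hg : ∀ w ∈ W, w • g ≠ 0) {u : ℤ} (hu : u ∈ W) {m : ℕ} (hm : 1 ≤ m)
    {T : Multiset G} (hT : ¬ HasDisjointWZeroSubsums W T m) :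
    ¬ HasDisjointWZeroSubsums W (g ::ₘ (-(u • g)) ::ₘ T) (m + 1) := by
  classical
  rintro ⟨ls, hlen, hprops, hle⟩
  by_cases hP : ∃ (la lb : List (ℤ × G)) (rest : List (List (ℤ × G))),
      ls.Perm (la :: lb :: rest) ∧
      ((g ∈ la.map Prod.snd ∧ (-(u • g)) ∈ lb.map Prod.snd) ∨
        ((-(u • g)) ∈ la.map Prod.snd ∧ g ∈ lb.map Prod.snd))
  · -- merge case
    obtain ⟨la, lb, rest, hperm, hor⟩ := hP
    have hla : la ∈ ls := hperm.symm.subset (by simp)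
    have hlb : lb ∈ ls := hperm.symm.subset (by simp)
    have hrestmem : ∀ l ∈ rest, l ∈ ls := fun l hl =>
      hperm.symm.subset (by simp [hl])
    have hrestlen : rest.length = m - 1 := by
      have := hperm.length_eq
      rw [hlen] at this
      simp at this
      omega
    obtain ⟨-, h₁W, h₁0⟩ := hprops la hla
    obtain ⟨-, h₂W, h₂0⟩ := hprops lb hlb
    have hdecomp : (↑(ls.flatten.map Prod.snd) : Multiset G) =
        ↑(la.map Prod.snd) + (↑(lb.map Prod.snd) + ↑(rest.flatten.map Prod.snd)) := by
      rw [flatten_coe_aux Prod.snd hperm]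
      simp [List.flatten_cons, ← Multiset.coe_add]
    rcases hor with ⟨hga, hhb⟩ | ⟨hha, hgb⟩
    · obtain ⟨pp, hpp, hppg⟩ := List.mem_map.1 hga
      obtain ⟨qq, hqq, hqqh⟩ := List.mem_map.1 hhb
      obtain ⟨L, X, Y, hLne, hLW, hL0, hXeq, hYeq, hLmap⟩ :=
        merge_aux hmul hg hu h₁W h₂W h₁0 h₂0 hpp hqq hppg hqqh
      apply hT
      refine ⟨L :: rest, by simp only [List.length_cons, hrestlen]; omega, ?_, ?_⟩
      · intro l hl
        rcases List.mem_cons.1 hl with rfl | hl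
        · exact ⟨hLne, hLW, hL0⟩
        · exact hprops l (hrestmem l hl)
      · rw [Multiset.le_iff_count]
        intro y
        have h1 := Multiset.count_le_of_le y hle
        rw [hdecomp, hXeq, hYeq] at h1
        have h2 : (↑(((L :: rest).flatten).map Prod.snd) : Multiset G) =
            (X + Y) + ↑(rest.flatten.map Prod.snd) := by
          rw [List.flatten_cons, List.map_append, ← Multiset.coe_add, hLmap]
        rw [h2]
        simp only [Multiset.count_add, Multiset.count_cons] at h1 ⊢
        split_ifs at h1 <;> omega
    · obtain ⟨pp, hpp, hppg⟩ := List.mem_map.1 hgb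
      obtain ⟨qq, hqq, hqqh⟩ := List.mem_map.1 hha
      obtain ⟨L, X, Y, hLne, hLW, hL0, hXeq, hYeq, hLmap⟩ :=
        merge_aux hmul hg hu h₂W h₁W h₂0 h₁0 hpp hqq hppg hqqh
      apply hT
      refine ⟨L :: rest, by simp only [List.length_cons, hrestlen]; omega, ?_, ?_⟩
      · intro l hl
        rcases List.mem_cons.1 hl with rfl | hl
        · exact ⟨hLne, hLW, hL0⟩
        · exact hprops l (hrestmem l hl)
      · rw [Multiset.le_iff_count]
        intro y
        have h1 := Multiset.count_le_of_le y hle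
        rw [hdecomp, hXeq, hYeq] at h1
        have h2 : (↑(((L :: rest).flatten).map Prod.snd) : Multiset G) =
            (X + Y) + ↑(rest.flatten.map Prod.snd) := by
          rw [List.flatten_cons, List.map_append, ← Multiset.coe_add, hLmap]
        rw [h2]
        simp only [Multiset.count_add, Multiset.count_cons] at h1 ⊢
        split_ifs at h1 <;> omega
  · -- no merge possible
    by_cases hMT : (↑(ls.flatten.map Prod.snd) : Multiset G) ≤ T
    · -- drop the head
      have hlsne : ls ≠ [] := by
        intro h; rw [h] at hlen; simp at hlen
      obtain ⟨hd, tl, rfl⟩ := List.exists_cons_of_ne_nil hlsne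
      apply hT
      refine ⟨tl, by simpa using hlen, fun l hl => hprops l (List.mem_cons_of_mem _ hl), ?_⟩
      refine le_trans ?_ hMT
      rw [Multiset.le_iff_count]
      intro y
      have : (↑(((hd :: tl).flatten).map Prod.snd) : Multiset G) =
          ↑(hd.map Prod.snd) + ↑(tl.flatten.map Prod.snd) := by
        rw [List.flatten_cons, List.map_append, ← Multiset.coe_add]
      rw [this, Multiset.count_add]
      omega
    · -- some element of {g, -(u•g)} is over budget; drop the subsum containing it
      have hover : ∃ y, Multiset.count y T < Multiset.count y (↑(ls.flatten.map Prod.snd) : Multiset G) := by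
        by_contra hno
        push_neg at hno
        exact hMT (Multiset.le_iff_count.2 hno)
      obtain ⟨y, hy⟩ := hover
      have hygh : y = g ∨ y = -(u • g) := by
        by_contra hnot
        push_neg at hnot
        have h1 := Multiset.count_le_of_le y hle
        rw [Multiset.count_cons, Multiset.count_cons, if_neg hnot.1, if_neg hnot.2] at h1
        omega
      have main : ∀ a b : G,
          (↑(ls.flatten.map Prod.snd) : Multiset G) ≤ a ::ₘ b ::ₘ T →
          ¬ (∃ (la lb : List (ℤ × G)) (rest : List (List (ℤ × G))),
              ls.Perm (la :: lb :: rest) ∧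
              ((a ∈ la.map Prod.snd ∧ b ∈ lb.map Prod.snd) ∨
                (b ∈ la.map Prod.snd ∧ a ∈ lb.map Prod.snd))) →
          Multiset.count a T < Multiset.count a (↑(ls.flatten.map Prod.snd) : Multiset G) →
          False := by
        intro a b hleab hnP hovera
        have haM : a ∈ ls.flatten.map Prod.snd := by
          have : 0 < Multiset.count a (↑(ls.flatten.map Prod.snd) : Multiset G) := by omega
          exact Multiset.mem_coe.1 (Multiset.count_pos.1 this)
        obtain ⟨p0, hp0f, hp0a⟩ := List.mem_map.1 haM
        obtain ⟨la, hla, hp0la⟩ := List.mem_flatten.1 hp0f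
        have hga : a ∈ la.map Prod.snd := List.mem_map.2 ⟨p0, hp0la, hp0a⟩
        obtain ⟨rest₁, hperm1⟩ := exists_perm_cons_aux hla
        have hdec : (↑(ls.flatten.map Prod.snd) : Multiset G) =
            ↑(la.map Prod.snd) + ↑(rest₁.flatten.map Prod.snd) := by
          rw [flatten_coe_aux Prod.snd hperm1]
          simp [List.flatten_cons, ← Multiset.coe_add]
        have hbQ : Multiset.count b (↑(rest₁.flatten.map Prod.snd) : Multiset G) = 0 := by
          by_contra hne
          have hbmem : b ∈ rest₁.flatten.map Prod.snd := by
            have : 0 < Multiset.count b (↑(rest₁.flatten.map Prod.snd) : Multiset G) :=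
              Nat.pos_of_ne_zero hne
            exact Multiset.mem_coe.1 (Multiset.count_pos.1 this)
          obtain ⟨q0, hq0f, hq0b⟩ := List.mem_map.1 hbmem
          obtain ⟨lb, hlb, hq0lb⟩ := List.mem_flatten.1 hq0f
          obtain ⟨rest₂, hperm2⟩ := exists_perm_cons_aux hlb
          exact hnP ⟨la, lb, rest₂, hperm1.trans (hperm2.cons la),
            Or.inl ⟨hga, List.mem_map.2 ⟨q0, hq0lb, hq0b⟩⟩⟩
        apply hT
        refine ⟨rest₁, ?_, fun l hl => hprops l (hperm1.symm.subset (List.mem_cons_of_mem _ hl)), ?_⟩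
        · have := hperm1.length_eq
          rw [hlen] at this
          simp at this
          omega
        · rw [Multiset.le_iff_count]
          intro y'
          have h1 := Multiset.count_le_of_le y' hleab
          rw [hdec] at h1
          simp only [Multiset.count_add, Multiset.count_cons] at h1
          have hcla : 1 ≤ Multiset.count a (↑(la.map Prod.snd) : Multiset G) :=
            Multiset.one_le_count_iff_mem.2 (Multiset.mem_coe.2 hga)
          by_cases hyb : y' = b
          · subst hyb
            rw [hbQ]
            exact Nat.zero_le _
          · by_cases hya : y' = a
            · subst hya
              rw [if_neg hyb, if_pos rfl] at h1
              omega
            · rw [if_neg hyb, if_neg hya] at h1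
              omega
      rcases hygh with h | h
      · exact main g (-(u • g)) hle hP (h ▸ hy)
      · refine main (-(u • g)) g ?_ ?_ (h ▸ hy)
        · rwa [Multiset.cons_swap] at hle
        · intro ⟨la, lb, rest, hperm, hor⟩
          exact hP ⟨la, lb, rest, hperm, hor.symm⟩

end AuxStmt10

section Pigeonhole

variable {G : Type*} [AddCommGroup G] [Fintype G]

lemma exists_block_aux {W : Set ℤ} {w₀ : ℤ} (hw₀ : w₀ ∈ W) (S : Multiset G)
    (hS : Fintype.card G ≤ Multiset.card S) :
    ∃ l : List (ℤ × G), l ≠ [] ∧ (∀ p ∈ l, p.1 ∈ W) ∧ WSaux l = 0 ∧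
      (↑(l.map Prod.snd) : Multiset G) ≤ S ∧ l.length ≤ Fintype.card G := by
  classical
  set n := Fintype.card G with hn
  have hlen : n ≤ S.toList.length := by rw [Multiset.length_toList]; exact hS
  have main : ∀ a b : Fin (n + 1), (a : ℕ) < b →
      ((S.toList.take a).map fun x => w₀ • x).sum = ((S.toList.take b).map fun x => w₀ • x).sum →
      ∃ l : List (ℤ × G), l ≠ [] ∧ (∀ p ∈ l, p.1 ∈ W) ∧ WSaux l = 0 ∧
        (↑(l.map Prod.snd) : Multiset G) ≤ S ∧ l.length ≤ Fintype.card G := by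
    intro a b hab hfeq
    set blk := (S.toList.drop a).take (b - a) with hblk
    have hblen : blk.length = (b : ℕ) - a := by
      rw [hblk, List.length_take, List.length_drop]
      have hb : (b : ℕ) ≤ S.toList.length := le_trans (by omega) hlen
      omega
    have hsplit : S.toList.take b = S.toList.take a ++ blk := by
      rw [hblk, ← List.take_add]
      congr 1
      omega
    refine ⟨blk.map fun x => (w₀, x), ?_, ?_, ?_, ?_, ?_⟩
    · intro hnil
      apply_fun List.length at hnil
      simp [hblen] at hnil
      omega
    · intro p hp
      obtain ⟨x, _, rfl⟩ := List.mem_map.1 hp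
      exact hw₀
    · have h1 : WSaux (blk.map fun x => (w₀, x)) = (blk.map fun x => w₀ • x).sum := by
        simp [WSaux, List.map_map, Function.comp_def]
      rw [h1]
      have h2 := hfeq
      rw [hsplit, List.map_append, List.sum_append] at h2
      exact (left_eq_add.1 h2)
    · have h1 : (blk.map fun x => (w₀, x)).map Prod.snd = blk := by
        simp [List.map_map, Function.comp_def]
      rw [h1]
      have hsub : blk.Sublist S.toList :=
        (List.take_sublist _ _).trans (List.drop_sublist _ _)
      have h2 := Multiset.coe_le.2 hsub.subperm
      rwa [Multiset.coe_toList] at h2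
    · rw [List.length_map, hblen]
      omega
  have hcard : Fintype.card G < Fintype.card (Fin (n + 1)) := by simp [hn]
  obtain ⟨a, b, hab, hfeq⟩ := Fintype.exists_ne_map_eq_of_card_lt
    (fun i : Fin (n + 1) => ((S.toList.take i).map fun x => w₀ • x).sum) hcard
  rcases lt_or_gt_of_ne hab with hlt | hgt
  · exact main a b hlt hfeq
  · exact main b a hgt hfeq.symm

lemma hasDisj_of_card_aux {W : Set ℤ} {w₀ : ℤ} (hw₀ : w₀ ∈ W) :
    ∀ (k : ℕ) (S : Multiset G), k * Fintype.card G ≤ Multiset.card S →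
      HasDisjointWZeroSubsums W S k := by
  intro k
  induction k with
  | zero => exact fun S _ => ⟨[], rfl, by simp, by simp⟩
  | succ k ih =>
    intro S hS
    rw [Nat.succ_mul] at hS
    have hcard1 : Fintype.card G ≤ Multiset.card S := by omega
    obtain ⟨l, hlne, hlW, hl0, hlle, hllen⟩ := exists_block_aux hw₀ S hcard1
    classical
    have hcardB : Multiset.card (↑(l.map Prod.snd) : Multiset G) = l.length := by
      rw [Multiset.coe_card, List.length_map]
    obtain ⟨ls, hlslen, hlsprops, hlsle⟩ := ih (S - ↑(l.map Prod.snd)) (by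
      rw [Multiset.card_sub hlle, hcardB]
      omega)
    refine ⟨l :: ls, by simp [hlslen], ?_, ?_⟩
    · intro l' hl'
      rcases List.mem_cons.1 hl' with rfl | hl'
      · exact ⟨hlne, hlW, hl0⟩
      · exact hlsprops l' hl'
    · rw [Multiset.le_iff_count]
      intro y
      have h1 := Multiset.count_le_of_le y hlsle
      have h2 := Multiset.count_le_of_le y hlle
      rw [Multiset.count_sub] at h1
      have h3 : (↑(((l :: ls).flatten).map Prod.snd) : Multiset G) =
          ↑(l.map Prod.snd) + ↑(ls.flatten.map Prod.snd) := by
        rw [List.flatten_cons, List.map_append, ← Multiset.coe_add]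
      rw [h3, Multiset.count_add]
      omega

end Pigeonhole

/-- if `|G| > 1`, `W` is multiplicatively closed modulo `exp(G)` and
non-trivial modulo `exp(G)`, then `D_{W,m+1}(G) ≥ D_{W,m}(G) + 2`. -/
theorem stmt10 {G : Type*} [AddCommGroup G] [Fintype G] (W : Set ℤ) (hW : W.Nonempty)
    (hcard : 1 < Fintype.card G) (m : ℕ) (hm : 1 ≤ m)
    (hmul : MulClosedMod W (AddMonoid.exponent G))
    (hnt : ∀ w ∈ W, ¬ ((AddMonoid.exponent G : ℤ) ∣ w)) :
    DW W G m + 2 ≤ DW W G (m + 1) := by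
  classical
  obtain ⟨u, hu⟩ := hW
  obtain ⟨g, hgord⟩ :=
    AddMonoid.exists_addOrderOf_eq_exponent (G := G) AddMonoid.ExponentExists.of_finite
  have hg : ∀ w ∈ W, w • g ≠ 0 := by
    intro w hw h0
    exact hnt w hw (by rw [← hgord]; exact addOrderOf_dvd_iff_zsmul_eq_zero.2 h0)
  have hAmem : ∀ k : ℕ, (k * Fintype.card G) ∈
      {n : ℕ | ∀ S : Multiset G, n ≤ Multiset.card S → HasDisjointWZeroSubsums W S k} :=
    fun k S hS => hasDisj_of_card_aux hu k S hS
  have hDmem : DW W G m ∈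
      {n : ℕ | ∀ S : Multiset G, n ≤ Multiset.card S → HasDisjointWZeroSubsums W S m} :=
    Nat.sInf_mem ⟨_, hAmem m⟩
  have hD1 : 1 ≤ DW W G m := by
    by_contra hlt
    push_neg at hlt
    have h0 : DW W G m = 0 := by omega
    have hHas : HasDisjointWZeroSubsums W (0 : Multiset G) m := by
      have := hDmem (0 : Multiset G)
      rw [h0] at this
      exact this (by simp)
    obtain ⟨ls, hlen, hprops, hle⟩ := hHas
    have hlsne : ls ≠ [] := by
      intro h; rw [h] at hlen; simp at hlen; omega
    obtain ⟨hd, tl, rfl⟩ := List.exists_cons_of_ne_nil hlsne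
    obtain ⟨hne, -, -⟩ := hprops hd List.mem_cons_self
    obtain ⟨p, hp⟩ := List.exists_mem_of_ne_nil hd hne
    have hmem : p.2 ∈ ((hd :: tl).flatten).map Prod.snd :=
      List.mem_map_of_mem (List.mem_flatten.2 ⟨hd, List.mem_cons_self, hp⟩)
    have h2 : (↑(((hd :: tl).flatten).map Prod.snd) : Multiset G) = 0 := Multiset.le_zero.1 hle
    have h3 : p.2 ∈ (↑(((hd :: tl).flatten).map Prod.snd) : Multiset G) := Multiset.mem_coe.2 hmem
    rw [h2] at h3
    exact Multiset.notMem_zero _ h3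
  obtain ⟨T, hTcard, hTno⟩ : ∃ T : Multiset G,
      (DW W G m - 1 ≤ Multiset.card T) ∧ ¬ HasDisjointWZeroSubsums W T m := by
    have hnotin : DW W G m - 1 ∉
        {n : ℕ | ∀ S : Multiset G, n ≤ Multiset.card S → HasDisjointWZeroSubsums W S m} :=
      Nat.notMem_of_lt_sInf (show DW W G m - 1 < DW W G m by omega)
    by_contra hc
    push_neg at hc
    exact hnotin (fun S hS => hc S hS)
  have hTcard' : Multiset.card T = DW W G m - 1 := by
    refine le_antisymm ?_ hTcard
    by_contra hgt
    push_neg at hgt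
    exact hTno (hDmem T (by omega))
  have hcrux := crux_aux hmul hg hu hm hTno
  have hcardS : Multiset.card (g ::ₘ (-(u • g)) ::ₘ T) = DW W G m + 1 := by
    simp only [Multiset.card_cons, hTcard']
    omega
  refine le_csInf ⟨_, hAmem (m + 1)⟩ ?_
  intro n hn
  by_contra hlt
  push_neg at hlt
  exact hcrux (hn (g ::ₘ (-(u • g)) ::ₘ T) (by rw [hcardS]; omega))
end
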